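/- arXiv:2507.02161 — 2 statements merged into one kernel-verified Lean document; each statement's English description precedes it below -/
import Mathlib

section
/- Let G be a simple graph on [n] and let i ∈ [n] be a vertex of the cycle graph C_n. Then the colon ideal (J_{C_n} : x_i) equals the binomial edge ideal J_{C_n^i}, where C_n^i is the graph obtained from C_n by adding the edge {i−1, i+1}. Consequently, for the lexicographic order with x_1 > ... > x_n > y_1 > ... > y_n, the initial ideal of (J_{C_n} : x_i) is contained in in(J_{C_n}) + (x_{i−1}, y_{i−1})·(x_{i+1}, y_{i+1}). -/
open MvPolynomial

variable {n : ℕ}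

/-- Number of connected components of the subgraph of `G` induced on `T`. -/
noncomputable def numComp (G : SimpleGraph (Fin n)) (T : Set (Fin n)) : ℕ :=
  Nat.card (G.induce T).ConnectedComponent

/-- `a` and `b` lie in the same connected component of the subgraph induced on `T`. -/
def SameComp (G : SimpleGraph (Fin n)) (T : Set (Fin n)) (a b : Fin n) : Prop :=
  ∃ (ha : a ∈ T) (hb : b ∈ T), (G.induce T).Reachable ⟨a, ha⟩ ⟨b, hb⟩

/-- `S` is a minimal `k`-cut of `G`. -/
def IsMinKCut (G : SimpleGraph (Fin n)) (S : Set (Fin n)) (k : ℕ) : Prop :=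
  S.Nonempty ∧ S ≠ Set.univ ∧ numComp G Sᶜ = k ∧
    ∀ i ∈ S, numComp G (Sᶜ ∪ {i}) < numComp G Sᶜ

/-- The collection `min(G)`: all minimal `k`-cuts (`k ≥ 2`) together with `∅`. -/
def minSet (G : SimpleGraph (Fin n)) : Set (Set (Fin n)) :=
  {S | S = ∅ ∨ ∃ k, 2 ≤ k ∧ IsMinKCut G S k}

/-- `A` is a connected dominating set of the subgraph of `G` induced on `T`. -/
def ConnDom (G : SimpleGraph (Fin n)) (T A : Set (Fin n)) : Prop :=
  A ⊆ T ∧ (G.induce A).Connected ∧ ∀ v ∈ T, v ∉ A → ∃ a ∈ A, G.Adj v a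

/-- The polynomial ring `K[x_1,…,x_n,y_1,…,y_n]` over `ℂ`. -/
abbrev PolyRing (n : ℕ) := MvPolynomial (Fin n ⊕ Fin n) ℂ

/-- The binomial `f_{i,j} = x_i y_j − x_j y_i`. -/
noncomputable def fij (i j : Fin n) : PolyRing n :=
  X (Sum.inl i) * X (Sum.inr j) - X (Sum.inl j) * X (Sum.inr i)

/-- The binomial edge ideal of a graph. -/
noncomputable def beIdeal (G : SimpleGraph (Fin n)) : Ideal (PolyRing n) :=
  Ideal.span {g | ∃ i j, G.Adj i j ∧ g = fij i j}

/-- Localized v-number of `I` at `p`. -/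
noncomputable def vAt (I p : Ideal (PolyRing n)) : ℕ :=
  sInf {d | ∃ f : PolyRing n, f.IsHomogeneous d ∧ Submodule.colon I (Ideal.span {f}) = p}

/-- v-number of `I`. -/
noncomputable def vNum (I : Ideal (PolyRing n)) : ℕ :=
  sInf {d | ∃ f : PolyRing n, f.IsHomogeneous d ∧ (Submodule.colon I (Ideal.span {f})).IsPrime}

/-- The graph which is the disjoint union of complete graphs on the connected
components of the subgraph of `G` induced on `Sᶜ`. -/
def tildeG (G : SimpleGraph (Fin n)) (S : Set (Fin n)) : SimpleGraph (Fin n) :=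
  SimpleGraph.fromRel (fun a b => SameComp G Sᶜ a b)

/-- The minimal prime `P_S` of the binomial edge ideal. -/
noncomputable def primePS (G : SimpleGraph (Fin n)) (S : Set (Fin n)) : Ideal (PolyRing n) :=
  Ideal.span (({g | ∃ i ∈ S, g = X (Sum.inl i)} ∪ {g | ∃ i ∈ S, g = X (Sum.inr i)} : Set (PolyRing n)))
    ⊔ beIdeal (tildeG G S)

/-- `B` is a dependent set of the rank-≤2 matroid `M(S)`. -/
def depM (G : SimpleGraph (Fin n)) (S : Set (Fin n)) (B : Set (Fin n)) : Prop :=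
  (B ∩ S).Nonempty ∨ (∃ a b, a ∈ B ∧ b ∈ B ∧ a ≠ b ∧ SameComp G Sᶜ a b) ∨ 3 ≤ B.ncard

/-- `A` is a transversal of `{D(M(S'))\D(M(S)) : S' ∈ min(G)\{S}}` consisting of
singletons and pairs outside `D(M(S))`. -/
def IsTransversal (G : SimpleGraph (Fin n)) (S : Set (Fin n))
    (A : Finset (Finset (Fin n))) : Prop :=
  (∀ e ∈ A, e.card = 1 ∨ e.card = 2) ∧ (∀ e ∈ A, ¬ depM G S ↑e) ∧
    ∀ S' ∈ minSet G, S' ≠ S → ∃ e ∈ A, depM G S' ↑e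

/-- The singletons of `A`, viewed as a subset of `[n]`. -/
def A1set (A : Finset (Finset (Fin n))) : Finset (Fin n) :=
  (A.filter fun e => e.card = 1).biUnion id

/-- The pairs of `A`. -/
def A2set (A : Finset (Finset (Fin n))) : Finset (Finset (Fin n)) :=
  A.filter fun e => e.card = 2

/-- The binomial attached to an unordered pair. -/
noncomputable def fPair (e : Finset (Fin n)) : PolyRing n :=
  if h : e.Nonempty then fij (e.min' h) (e.max' h) else 1

/-- The generator `g_{A,C,D}`. -/
noncomputable def gPoly (A : Finset (Finset (Fin n))) (C D : Finset (Fin n)) : PolyRing n :=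
  (∏ k ∈ C, X (Sum.inl k)) * (∏ k ∈ D, X (Sum.inr k)) * ∏ e ∈ A2set A, fPair e

/-- The cycle graph on `[n]`. -/
def cycG (n : ℕ) [NeZero n] : SimpleGraph (Fin n) :=
  SimpleGraph.fromRel (fun i j => j = i + 1)

/-- The connected domination number of `G`. -/
noncomputable def gammaC (G : SimpleGraph (Fin n)) : ℕ :=
  sInf {k | ∃ A : Set (Fin n), ConnDom G Set.univ A ∧ A.ncard = k}

/-- `S'` is nice with respect to the components `V1`, `V2`. -/
def Nice (G : SimpleGraph (Fin n)) (V1 V2 S' : Set (Fin n)) : Prop :=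
  ¬ ∃ i j, i ∈ V1 \ S' ∧ j ∈ V2 \ S' ∧ SameComp G S'ᶜ i j

/-- `V1`, `V2` are the vertex sets of the two connected components of the
subgraph induced on `Sᶜ`. -/
def ComponentsOf (G : SimpleGraph (Fin n)) (S V1 V2 : Set (Fin n)) : Prop :=
  V1 ∪ V2 = Sᶜ ∧ Disjoint V1 V2 ∧ V1.Nonempty ∧ V2.Nonempty ∧
    (∀ a ∈ V1, ∀ b ∈ V1, SameComp G Sᶜ a b) ∧
    (∀ a ∈ V2, ∀ b ∈ V2, SameComp G Sᶜ a b) ∧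
    ∀ a ∈ V1, ∀ b ∈ V2, ¬ SameComp G Sᶜ a b

/-- Significance index of a variable: `x_1 > ⋯ > x_n > y_1 > ⋯ > y_n`. -/
def sigIdx (n : ℕ) : Fin n ⊕ Fin n → ℕ := Sum.elim (fun i => (i : ℕ)) (fun i => n + i)

/-- Lexicographic comparison of exponent vectors. -/
def lexLt (n : ℕ) (a b : (Fin n ⊕ Fin n) →₀ ℕ) : Prop :=
  ∃ v, a v < b v ∧ ∀ w, sigIdx n w < sigIdx n v → a w = b w

/-- `m` is the leading (lex-largest) exponent of `f`. -/
def IsLeadExp (n : ℕ) (f : PolyRing n) (m : (Fin n ⊕ Fin n) →₀ ℕ) : Prop :=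
  m ∈ f.support ∧ ∀ m' ∈ f.support, m' ≠ m → lexLt n m' m

/-- The initial ideal of `I` with respect to the lexicographic order. -/
noncomputable def inIdeal (I : Ideal (PolyRing n)) : Ideal (PolyRing n) :=
  Ideal.span {g | ∃ f ∈ I, ∃ m, IsLeadExp n f m ∧ g = monomial m 1}

/-- A permutation `σ` of `[n]` is `S`-consistent (for `S` an independent set of
the cycle `C_n`). -/
def SConsistent (n : ℕ) [NeZero n] (S : Set (Fin n)) (σ : Equiv.Perm (Fin n)) : Prop :=
  (∀ x : Fin n, x ∉ S → x + 1 ∈ S →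
    ((σ x < σ (x + 2) → x + 3 ∉ S → σ (x + 2) < σ (x + 3)) ∧
     (σ x < σ (x + 2) → x - 1 ∉ S → σ (x - 1) < σ x) ∧
     (σ (x + 2) < σ x → x + 3 ∉ S → σ (x + 3) < σ (x + 2)) ∧
     (σ (x + 2) < σ x → x - 1 ∉ S → σ x < σ (x - 1)))) ∧
  (∀ y : Fin n, y - 1 ∉ S → y ∉ S → y + 1 ∉ S → (σ (y - 1) < σ y ↔ σ y < σ (y + 1)))

namespace BEI
variable {n : ℕ}

abbrev M (n : ℕ) := (Fin n ⊕ Fin n) →₀ ℕ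

/-- single x_j exponent -/
noncomputable def ex (j : Fin n) : M n := Finsupp.single (Sum.inl j) 1
noncomputable def ey (j : Fin n) : M n := Finsupp.single (Sum.inr j) 1

/-- One swap move along an edge. -/
def Step (G : SimpleGraph (Fin n)) (m m' : M n) : Prop :=
  ∃ j k, ∃ u : M n, G.Adj j k ∧ m = u + ex j + ey k ∧ m' = u + ex k + ey j

def Equi (G : SimpleGraph (Fin n)) : M n → M n → Prop :=
  Relation.ReflTransGen (Step G)

lemma Step.symm {G : SimpleGraph (Fin n)} {m m' : M n} (h : Step G m m') : Step G m' m := by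
  obtain ⟨j, k, u, hadj, h1, h2⟩ := h
  exact ⟨k, j, u, hadj.symm, h2, h1⟩

lemma Equi.refl (G : SimpleGraph (Fin n)) (m : M n) : Equi G m m := Relation.ReflTransGen.refl

lemma Equi.trans {G : SimpleGraph (Fin n)} {a b c : M n} (h1 : Equi G a b) (h2 : Equi G b c) :
    Equi G a c := Relation.ReflTransGen.trans h1 h2

lemma Equi.symm {G : SimpleGraph (Fin n)} {a b : M n} (h : Equi G a b) : Equi G b a := by
  induction h with
  | refl => exact Equi.refl G a
  | tail hs h ih => exact Relation.ReflTransGen.trans (Relation.ReflTransGen.single h.symm) ih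

lemma Step.equi {G : SimpleGraph (Fin n)} {a b : M n} (h : Step G a b) : Equi G a b :=
  Relation.ReflTransGen.single h

/-- multidegree at a vertex -/
def mdeg (m : M n) (j : Fin n) : ℕ := m (Sum.inl j) + m (Sum.inr j)

lemma Step.mdeg_eq {G : SimpleGraph (Fin n)} {a b : M n} (h : Step G a b) : mdeg a = mdeg b := by
  obtain ⟨j, k, u, hadj, rfl, rfl⟩ := h
  funext v
  simp [mdeg, ex, ey, Finsupp.add_apply, Finsupp.single_apply]
  by_cases hj : j = v <;> by_cases hk : k = v <;> simp [hj, hk] <;> omega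

lemma Equi.mdeg_eq {G : SimpleGraph (Fin n)} {a b : M n} (h : Equi G a b) : mdeg a = mdeg b := by
  induction h with
  | refl => rfl
  | tail hs h ih => exact ih.trans h.mdeg_eq

lemma Equi.add_right {G : SimpleGraph (Fin n)} {a b : M n} (v : M n) (h : Equi G a b) :
    Equi G (a + v) (b + v) := by
  refine Relation.ReflTransGen.lift (· + v) ?_ _ _ h
  rintro x y ⟨j, k, u, hadj, rfl, rfl⟩
  exact ⟨j, k, u + v, hadj, by abel, by abel⟩

lemma Equi.mono {G G' : SimpleGraph (Fin n)} (hle : G ≤ G') {a b : M n} (h : Equi G a b) :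
    Equi G' a b := by
  refine Relation.ReflTransGen.lift id ?_ _ _ h
  rintro x y ⟨j, k, u, hadj, rfl, rfl⟩
  exact ⟨j, k, u, hle hadj, rfl, rfl⟩

/-- x-coordinate bounded by mdeg -/
lemma xle (m : M n) (j : Fin n) : m (Sum.inl j) ≤ mdeg m j := Nat.le_add_right _ _
lemma yle (m : M n) (j : Fin n) : m (Sum.inr j) ≤ mdeg m j := Nat.le_add_left _ _


open Classical

/-- Sum of the coefficients of `h` over the `Equi G`-class of `m0`. -/
noncomputable def clsSum (G : SimpleGraph (Fin n)) (m0 : M n) (h : PolyRing n) : ℂ :=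
  ∑ m ∈ h.support, if Equi G m0 m then h.coeff m else 0

lemma clsSum_eq_sum (G : SimpleGraph (Fin n)) (m0 : M n) (h : PolyRing n)
    {A : Finset (M n)} (hA : h.support ⊆ A) :
    clsSum G m0 h = ∑ m ∈ A, if Equi G m0 m then (h.coeff m : ℂ) else 0 := by
  rw [clsSum]
  refine Finset.sum_subset hA ?_
  intro m _ hm
  rw [notMem_support_iff.mp hm, ite_self]

lemma clsSum_add (G : SimpleGraph (Fin n)) (m0 : M n) (h1 h2 : PolyRing n) :
    clsSum G m0 (h1 + h2) = clsSum G m0 h1 + clsSum G m0 h2 := by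
  classical
  set A := (h1 + h2).support ∪ (h1.support ∪ h2.support) with hA
  rw [clsSum_eq_sum G m0 (h1+h2) (A := A) (Finset.subset_union_left),
      clsSum_eq_sum G m0 h1 (A := A) ((Finset.subset_union_left).trans Finset.subset_union_right),
      clsSum_eq_sum G m0 h2 (A := A) ((Finset.subset_union_right).trans Finset.subset_union_right),
      ← Finset.sum_add_distrib]
  refine Finset.sum_congr rfl fun m _ => ?_
  by_cases hE : Equi G m0 m <;> simp [hE, coeff_add]

lemma clsSum_smul (G : SimpleGraph (Fin n)) (m0 : M n) (c : ℂ) (h : PolyRing n) :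
    clsSum G m0 (c • h) = c * clsSum G m0 h := by
  classical
  rw [clsSum_eq_sum G m0 (c • h) (A := h.support) support_smul,
      clsSum, Finset.mul_sum]
  refine Finset.sum_congr rfl fun m _ => ?_
  by_cases hE : Equi G m0 m <;> simp [hE, coeff_smul]

lemma clsSum_monomial (G : SimpleGraph (Fin n)) (m0 u : M n) (c : ℂ) :
    clsSum G m0 (monomial u c) = if Equi G m0 u then c else 0 := by
  by_cases hc : c = 0
  · simp [hc, clsSum]
  · rw [clsSum, support_monomial, if_neg hc, Finset.sum_singleton, coeff_monomial, if_pos rfl]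

/-- The key grouping lemma: if all class sums vanish, then the sum over any
`Equi`-closed set of monomials vanishes. -/
lemma group_lemma (G : SimpleGraph (Fin n)) (s : Finset (M n)) (c : M n → ℂ)
    (H : ∀ m0 ∈ s, (∑ m ∈ s, if Equi G m0 m then c m else 0) = 0)
    (T : M n → Prop) (hT : ∀ a b, Equi G a b → T a → T b) :
    (∑ m ∈ s, if T m then c m else 0) = 0 := by
  classical
  generalize hN : (s.filter T).card = N
  induction N using Nat.strong_induction_on generalizing T with
  | _ N ih =>
    rcases Nat.eq_zero_or_pos N with h0 | hpos
    · subst h0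
      have hempty : s.filter T = ∅ := Finset.card_eq_zero.mp hN
      refine Finset.sum_eq_zero fun m hm => ?_
      have : ¬ T m := by
        intro hTm
        have : m ∈ s.filter T := Finset.mem_filter.mpr ⟨hm, hTm⟩
        simp [hempty] at this
      simp [this]
    · obtain ⟨m0, hm0⟩ := Finset.card_pos.mp (hN ▸ hpos)
      obtain ⟨hm0s, hm0T⟩ := Finset.mem_filter.mp hm0
      set T' : M n → Prop := fun m => T m ∧ ¬ Equi G m0 m with hT'
      have hsplit : (∑ m ∈ s, if T m then c m else 0)
          = (∑ m ∈ s, if Equi G m0 m then c m else 0)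
            + (∑ m ∈ s, if T' m then c m else 0) := by
        rw [← Finset.sum_add_distrib]
        refine Finset.sum_congr rfl fun m _ => ?_
        by_cases hE : Equi G m0 m
        · have : T m := hT m0 m hE hm0T
          simp [this, hE, hT']
        · by_cases hTm : T m <;> simp [hTm, hE, hT']
      rw [hsplit, H m0 hm0s, zero_add]
      have hT'closed : ∀ a b, Equi G a b → T' a → T' b := by
        rintro a b hab ⟨ha1, ha2⟩
        exact ⟨hT a b hab ha1, fun hb => ha2 (hb.trans hab.symm)⟩
      have hss : s.filter T' ⊂ s.filter T := by
        refine Finset.ssubset_iff_of_subset ?_ |>.mpr ?_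
        · intro x hx
          rw [Finset.mem_filter] at hx ⊢
          exact ⟨hx.1, hx.2.1⟩
        · exact ⟨m0, hm0, by simp [hT', Equi.refl]⟩
      have hcard : (s.filter T').card < N := hN ▸ Finset.card_lt_card hss
      have h2 := ih _ hcard T' hT'closed (by congr!)
      convert h2 using 2
      congr!


lemma clsSum_sub (G : SimpleGraph (Fin n)) (m0 : M n) (h1 h2 : PolyRing n) :
    clsSum G m0 (h1 - h2) = clsSum G m0 h1 - clsSum G m0 h2 := by
  have := clsSum_add G m0 (h1 - h2) h2
  rw [sub_add_cancel] at this
  linear_combination -this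

lemma fij_eq (j k : Fin n) :
    fij j k = monomial (ex j + ey k) (1:ℂ) - monomial (ex k + ey j) 1 := by
  rw [fij, X, X, X, X, monomial_mul, monomial_mul, one_mul]
  rfl

lemma equi_sub_monomial_mem {G : SimpleGraph (Fin n)} {a b : M n} (h : Equi G a b) :
    (monomial a (1:ℂ) - monomial b 1) ∈ beIdeal G := by
  induction h with
  | refl => simp
  | @tail b' c' hs hstep ih =>
    have hbc : (monomial b' (1:ℂ) - monomial c' 1) ∈ beIdeal G := by
      obtain ⟨j, k, u, hadj, rfl, rfl⟩ := hstep
      have key : monomial (u + ex j + ey k) (1:ℂ) - monomial (u + ex k + ey j) 1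
          = monomial u 1 * fij j k := by
        rw [fij_eq, mul_sub, monomial_mul, monomial_mul, one_mul, add_assoc, add_assoc]
      rw [key]
      exact Ideal.mul_mem_left _ _ (Ideal.subset_span ⟨j, k, hadj, rfl⟩)
    have : (monomial a (1:ℂ) - monomial c' 1)
        = (monomial a 1 - monomial b' 1) + (monomial b' 1 - monomial c' 1) := by ring
    rw [this]
    exact add_mem ih hbc

lemma clsSum_mul_X (G : SimpleGraph (Fin n)) {h : PolyRing n}
    (hz : ∀ m0, clsSum G m0 h = 0) (v : Fin n ⊕ Fin n) :
    ∀ m0, clsSum G m0 (h * X v) = 0 := by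
  intro m0
  rw [clsSum, support_mul_X, Finset.sum_map]
  have hco : ∀ m : M n, (h * X v).coeff (addRightEmbedding (Finsupp.single v 1) m)
      = h.coeff m := by
    intro m
    show (h * X v).coeff (m + Finsupp.single v 1) = h.coeff m
    exact coeff_mul_X m v h
  have hre : ∀ m : M n, (addRightEmbedding (Finsupp.single v 1) m)
      = m + Finsupp.single v 1 := fun _ => rfl
  calc (∑ m ∈ h.support, if Equi G m0 (addRightEmbedding (Finsupp.single v 1) m)
          then (h * X v).coeff (addRightEmbedding (Finsupp.single v 1) m) else 0)
      = ∑ m ∈ h.support, if (Equi G m0 (m + Finsupp.single v 1)) then h.coeff m else 0 := by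
        refine Finset.sum_congr rfl fun m _ => ?_
        rw [hco, hre]
    _ = 0 := by
        refine group_lemma G h.support (fun m => h.coeff m) ?_
          (fun m => Equi G m0 (m + Finsupp.single v 1)) ?_
        · intro m1 hm1
          have := hz m1
          rw [clsSum] at this
          convert this using 2
        · intro a b hab hTa
          exact hTa.trans (hab.add_right _)

lemma clsSum_mul (G : SimpleGraph (Fin n)) (q : PolyRing n) {h : PolyRing n}
    (hz : ∀ m0, clsSum G m0 h = 0) : ∀ m0, clsSum G m0 (q * h) = 0 := by
  induction q using MvPolynomial.induction_on with
  | C a =>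
    intro m0
    rw [C_mul', clsSum_smul, hz m0, mul_zero]
  | add p q hp hq =>
    intro m0
    rw [add_mul, clsSum_add, hp m0, hq m0, add_zero]
  | mul_X p v hp =>
    intro m0
    rw [mul_right_comm]
    exact clsSum_mul_X G hp v m0

theorem mem_beIdeal_iff (G : SimpleGraph (Fin n)) (h : PolyRing n) :
    h ∈ beIdeal G ↔ ∀ m0, clsSum G m0 h = 0 := by
  constructor
  · intro hmem
    refine Submodule.span_induction ?_ ?_ ?_ ?_ hmem
    · rintro g ⟨j, k, hadj, rfl⟩ m0
      rw [fij_eq, clsSum_sub, clsSum_monomial, clsSum_monomial]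
      have hstep : Equi G (ex j + ey k) (ex k + ey j) :=
        Relation.ReflTransGen.single ⟨j, k, 0, hadj, by rw [zero_add], by rw [zero_add]⟩
      by_cases hE : Equi G m0 (ex j + ey k)
      · rw [if_pos hE, if_pos (hE.trans hstep), sub_self]
      · rw [if_neg hE, if_neg (fun hE2 => hE (hE2.trans hstep.symm)), sub_self]
    · intro m0
      simp [clsSum]
    · intro p q _ _ hp hq m0
      rw [clsSum_add, hp m0, hq m0, add_zero]
    · intro a x _ hx
      rw [smul_eq_mul]
      exact clsSum_mul G a hx
  · intro hz
    generalize hN : h.support.card = N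
    induction N using Nat.strong_induction_on generalizing h with
    | _ N ih =>
      rcases Nat.eq_zero_or_pos N with h0 | hpos
      · subst h0
        have : h = 0 := by
          rw [← support_eq_empty, ← Finset.card_eq_zero, hN]
        rw [this]; exact zero_mem _
      · obtain ⟨m0, hm0⟩ := Finset.card_pos.mp (hN ▸ hpos)
        have hc0 : h.coeff m0 ≠ 0 := mem_support_iff.mp hm0
        -- find another member of the class in the support
        have hex : ∃ m1 ∈ h.support, m1 ≠ m0 ∧ Equi G m0 m1 := by
          by_contra hno
          push_neg at hno
          have := hz m0
          rw [clsSum, Finset.sum_eq_single_of_mem m0 hm0 ?_] at this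
          · rw [if_pos (Equi.refl G m0)] at this
            exact hc0 this
          · intro b hb hbne
            rcases Classical.em (Equi G m0 b) with hE | hE
            · exact absurd hE (hno b hb hbne)
            · rw [if_neg hE]
        obtain ⟨m1, hm1s, hm1ne, hm1e⟩ := hex
        set g : PolyRing n := (h.coeff m0) • (monomial m0 1 - monomial m1 1) with hg
        have hgmem : g ∈ beIdeal G := by
          rw [hg, ← C_mul']
          exact Ideal.mul_mem_left _ _ (equi_sub_monomial_mem hm1e)
        have hgz : ∀ m', clsSum G m' g = 0 := by
          intro m'
          rw [hg, clsSum_smul, clsSum_sub, clsSum_monomial, clsSum_monomial]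
          by_cases hE : Equi G m' m0
          · rw [if_pos hE, if_pos (hE.trans hm1e), sub_self, mul_zero]
          · rw [if_neg hE, if_neg (fun h2 => hE (h2.trans hm1e.symm)), sub_self, mul_zero]
        have hgm0 : g.coeff m0 = h.coeff m0 := by
          rw [hg]
          simp [coeff_smul, coeff_sub, coeff_monomial, hm1ne]
        have hsupp : (h - g).support ⊆ h.support.erase m0 := by
          intro m hm
          rw [mem_support_iff, coeff_sub] at hm
          have hmne : m ≠ m0 := by
            rintro rfl
            rw [hgm0, sub_self] at hm
            exact hm rfl
          refine Finset.mem_erase.mpr ⟨hmne, mem_support_iff.mpr ?_⟩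
          intro hch
          rw [hch, zero_sub, neg_ne_zero, hg] at hm
          simp only [coeff_smul, coeff_sub, coeff_monomial, smul_eq_mul] at hm
          rcases eq_or_ne m1 m with h2 | h2
          · subst h2
            exact (mem_support_iff.mp hm1s) hch
          · have h0 : m0 ≠ m := fun h => hmne h.symm
            simp [h0, h2] at hm
        have hcard : (h - g).support.card < N := by
          calc (h - g).support.card ≤ (h.support.erase m0).card := Finset.card_le_card hsupp
            _ < h.support.card := Finset.card_erase_lt_of_mem hm0
            _ = N := hN
        have hmem' : h - g ∈ beIdeal G := by
          refine ih _ hcard (h := h - g) ?_ rfl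
          intro m'
          rw [clsSum_sub, hz m', hgz m', sub_zero]
        have : h = (h - g) + g := by ring
        rw [this]
        exact add_mem hmem' hgmem


/-! ### Routing tokens along paths -/

/-- Reachability within the support of the multidegree `d`. -/
def Conn (G : SimpleGraph (Fin n)) (d : Fin n → ℕ) : Fin n → Fin n → Prop :=
  Relation.ReflTransGen (fun a b => G.Adj a b ∧ d a ≠ 0 ∧ d b ≠ 0)

lemma Conn.symm {G : SimpleGraph (Fin n)} {d : Fin n → ℕ} {a b : Fin n}
    (h : Conn G d a b) : Conn G d b a := by
  induction h with
  | refl => exact Relation.ReflTransGen.refl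
  | tail hs h ih =>
    exact Relation.ReflTransGen.trans
      (Relation.ReflTransGen.single ⟨h.1.symm, h.2.2, h.2.1⟩) ih

lemma Conn.trans {G : SimpleGraph (Fin n)} {d : Fin n → ℕ} {a b c : Fin n}
    (h1 : Conn G d a b) (h2 : Conn G d b c) : Conn G d a c :=
  Relation.ReflTransGen.trans h1 h2

lemma sub_add_single (u : M n) (v : Fin n ⊕ Fin n) (h : 1 ≤ u v) :
    u = (u - Finsupp.single v 1) + Finsupp.single v 1 := by
  ext w
  rw [Finsupp.add_apply, Finsupp.tsub_apply, Finsupp.single_apply]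
  by_cases hv : v = w
  · subst hv; simp; omega
  · simp [hv]

lemma mdeg_add (a b : M n) (v : Fin n) : mdeg (a + b) v = mdeg a v + mdeg b v := by
  simp [mdeg, Finsupp.add_apply]; omega

lemma mdeg_ex (j v : Fin n) : mdeg (ex j) v = if j = v then 1 else 0 := by
  simp [mdeg, ex, Finsupp.single_apply]

lemma mdeg_ey (j v : Fin n) : mdeg (ey j) v = if j = v then 1 else 0 := by
  simp [mdeg, ey, Finsupp.single_apply]

/-- The routing lemma: an `x`-token at `j` can be exchanged with a `y`-token at `k`
whenever `j` and `k` are connected through the support of the multidegree. -/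
lemma route {G : SimpleGraph (Fin n)} {d : Fin n → ℕ} {j k : Fin n}
    (hconn : Conn G d j k) :
    ∀ u : M n, mdeg (u + ex j + ey k) = d → Equi G (u + ex j + ey k) (u + ex k + ey j) := by
  induction hconn using Relation.ReflTransGen.head_induction_on with
  | refl => intro u _; exact Equi.refl G _
  | head h' hrest ih =>
    rename_i j p
    intro u hdeg
    obtain ⟨hadj, hdj, hdp⟩ := h'
    have hjp : j ≠ p := hadj.ne
    by_cases hpk : p = k
    · subst hpk
      exact (Relation.ReflTransGen.single ⟨j, p, u, hadj, rfl, rfl⟩ : Equi G _ _)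
    by_cases hyp : 1 ≤ u (Sum.inr p)
    · -- y-token available at p: swap (j,p) first, then route from p to k
      set u' := u - Finsupp.single (Sum.inr p) 1 with hu'
      have hu : u = u' + ey p := sub_add_single u (Sum.inr p) hyp
      have e1 : u + ex j + ey k = (u' + ey k) + ex j + ey p := by rw [hu]; abel
      have step1 : Equi G (u + ex j + ey k) ((u' + ey k) + ex p + ey j) := by
        rw [e1]
        exact Relation.ReflTransGen.single ⟨j, p, u' + ey k, hadj, rfl, rfl⟩
      have e2 : (u' + ey k) + ex p + ey j = (u' + ey j) + ex p + ey k := by abel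
      have e3 : mdeg ((u' + ey j) + ex p + ey k) = d := by
        funext v
        have := congrFun hdeg v
        rw [hu] at this
        rw [← this]
        simp only [mdeg_add, mdeg_ex, mdeg_ey]
        by_cases h1 : p = v <;> by_cases h2 : j = v <;> by_cases h3 : k = v <;> simp [h1, h2, h3] <;> omega
      have step2 : Equi G ((u' + ey j) + ex p + ey k) ((u' + ey j) + ex k + ey p) :=
        ih (u' + ey j) e3
      have e4 : (u' + ey j) + ex k + ey p = u + ex k + ey j := by rw [hu]; abel
      rw [← e4]
      exact (step1.trans (e2 ▸ step2))
    · -- p is full of x-tokens: route one from p to k first, then swap (j,p)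
      have hxp : 1 ≤ u (Sum.inl p) := by
        have := congrFun hdeg p
        simp only [mdeg_add, mdeg_ex, mdeg_ey] at this
        have hjp' : ¬ (j = p) := hjp
        have hkp' : ¬ (k = p) := fun h => hpk h.symm
        rw [if_neg hjp', if_neg hkp'] at this
        simp only [mdeg] at this
        omega
      set u'' := u - Finsupp.single (Sum.inl p) 1 with hu''
      have hu : u = u'' + ex p := sub_add_single u (Sum.inl p) hxp
      have e1 : u + ex j + ey k = (u'' + ex j) + ex p + ey k := by rw [hu]; abel
      have e3 : mdeg ((u'' + ex j) + ex p + ey k) = d := by rw [← e1]; exact hdeg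
      have step1 : Equi G ((u'' + ex j) + ex p + ey k) ((u'' + ex j) + ex k + ey p) :=
        ih (u'' + ex j) e3
      have e2 : (u'' + ex j) + ex k + ey p = (u'' + ex k) + ex j + ey p := by abel
      have step2 : Equi G ((u'' + ex k) + ex j + ey p) ((u'' + ex k) + ex p + ey j) :=
        Relation.ReflTransGen.single ⟨j, p, u'' + ex k, hadj, rfl, rfl⟩
      have e4 : (u'' + ex k) + ex p + ey j = u + ex k + ey j := by rw [hu]; abel
      rw [e1, ← e4]
      exact (step1.trans (e2 ▸ step2))


/-! ### Matching: equal class sums imply equivalence -/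

lemma match_equi {G : SimpleGraph (Fin n)} {d : Fin n → ℕ} {m m' : M n}
    (hm : mdeg m = d) (hm' : mdeg m' = d)
    (H : ∀ j, ∑ k ∈ Finset.univ.filter (fun v => Conn G d j v), m (Sum.inl k)
            = ∑ k ∈ Finset.univ.filter (fun v => Conn G d j v), m' (Sum.inl k)) :
    Equi G m m' := by
  generalize hN : (∑ j : Fin n, ((m (Sum.inl j) - m' (Sum.inl j)) + (m' (Sum.inl j) - m (Sum.inl j)))) = N
  induction N using Nat.strong_induction_on generalizing m with
  | _ N ih =>
    rcases Nat.eq_zero_or_pos N with h0 | hpos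
    · -- all x-coordinates agree, hence the monomials agree
      subst h0
      have hall : ∀ j : Fin n, m (Sum.inl j) = m' (Sum.inl j) := by
        intro j
        have := Finset.sum_eq_zero_iff.mp hN j (Finset.mem_univ j)
        omega
      have : m = m' := by
        ext w
        cases w with
        | inl j => exact hall j
        | inr j =>
          have h1 := congrFun hm j
          have h2 := congrFun hm' j
          simp only [mdeg] at h1 h2
          have := hall j
          omega
      rw [this]
      exact Equi.refl G m'
    · -- find an excess vertex and a deficient vertex in the same class
      have hexj : ∃ j : Fin n, m (Sum.inl j) ≠ m' (Sum.inl j) := by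
        by_contra hno
        push_neg at hno
        have : (∑ j : Fin n, ((m (Sum.inl j) - m' (Sum.inl j)) + (m' (Sum.inl j) - m (Sum.inl j)))) = 0 :=
          Finset.sum_eq_zero fun j _ => by rw [hno j]; omega
        omega
      obtain ⟨j0, hj0⟩ := hexj
      -- produce a ∈ class, b ∈ class with m x_a > m' x_a, m x_b < m' x_b, Conn a b
      have key : ∃ a b : Fin n, Conn G d a b ∧ m' (Sum.inl a) < m (Sum.inl a)
          ∧ m (Sum.inl b) < m' (Sum.inl b) := by
        rcases Nat.lt_or_ge (m' (Sum.inl j0)) (m (Sum.inl j0)) with hgt | hge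
        · -- excess at j0, find deficiency in its class
          have : ∃ b ∈ Finset.univ.filter (fun v => Conn G d j0 v),
              m (Sum.inl b) < m' (Sum.inl b) := by
            by_contra hno
            push_neg at hno
            have hlt : ∑ k ∈ Finset.univ.filter (fun v => Conn G d j0 v), m' (Sum.inl k)
                < ∑ k ∈ Finset.univ.filter (fun v => Conn G d j0 v), m (Sum.inl k) := by
              refine Finset.sum_lt_sum (fun k hk => hno k hk) ⟨j0, ?_, hgt⟩
              exact Finset.mem_filter.mpr ⟨Finset.mem_univ _, Relation.ReflTransGen.refl⟩
            rw [H j0] at hlt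
            exact lt_irrefl _ hlt
          obtain ⟨b, hbmem, hb⟩ := this
          exact ⟨j0, b, (Finset.mem_filter.mp hbmem).2, hgt, hb⟩
        · have hlt0 : m (Sum.inl j0) < m' (Sum.inl j0) := lt_of_le_of_ne hge hj0
          have : ∃ a ∈ Finset.univ.filter (fun v => Conn G d j0 v),
              m' (Sum.inl a) < m (Sum.inl a) := by
            by_contra hno
            push_neg at hno
            have hlt : ∑ k ∈ Finset.univ.filter (fun v => Conn G d j0 v), m (Sum.inl k)
                < ∑ k ∈ Finset.univ.filter (fun v => Conn G d j0 v), m' (Sum.inl k) := by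
              refine Finset.sum_lt_sum (fun k hk => hno k hk) ⟨j0, ?_, hlt0⟩
              exact Finset.mem_filter.mpr ⟨Finset.mem_univ _, Relation.ReflTransGen.refl⟩
            rw [H j0] at hlt
            exact lt_irrefl _ hlt
          obtain ⟨a, hamem, ha⟩ := this
          exact ⟨a, j0, ((Finset.mem_filter.mp hamem).2).symm, ha, hlt0⟩
      obtain ⟨a, b, hab, haex, hbdef⟩ := key
      have hane : a ≠ b := by
        intro h; subst h; omega
      have hxa : 1 ≤ m (Sum.inl a) := by omega
      have hyb : 1 ≤ m (Sum.inr b) := by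
        have h1 := congrFun hm b
        have h2 := congrFun hm' b
        simp only [mdeg] at h1 h2
        have : m' (Sum.inl b) ≤ d b := by omega
        omega
      -- write m = u + ex a + ey b
      set u : M n := m - ex a - ey b with hu'
      have hu : m = u + ex a + ey b := by
        ext w
        simp only [hu', ex, ey, Finsupp.add_apply, Finsupp.tsub_apply, Finsupp.single_apply]
        rcases eq_or_ne (Sum.inl a) w with h1 | h1
        · subst h1
          simp [hane]
          omega
        · rcases eq_or_ne (Sum.inr b) w with h2 | h2
          · subst h2
            simp at hyb ⊢
            omega
          · simp [h1, h2]
      have hroute : Equi G m (u + ex b + ey a) := by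
        rw [hu]
        exact route hab u (by rw [← hu]; exact hm)
      set m1 : M n := u + ex b + ey a with hm1'
      have hm1deg : mdeg m1 = d := by rw [← hroute.mdeg_eq]; exact hm
      -- coordinates of m1
      have hm1x : ∀ v : Fin n, m1 (Sum.inl v) = u (Sum.inl v) + (if b = v then 1 else 0) := by
        intro v
        simp [hm1', ex, ey, Finsupp.add_apply, Finsupp.single_apply]
      have hmx : ∀ v : Fin n, m (Sum.inl v) = u (Sum.inl v) + (if a = v then 1 else 0) := by
        intro v
        rw [hu]
        simp [ex, ey, Finsupp.add_apply, Finsupp.single_apply]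
      -- class sums are preserved
      have H1 : ∀ j, ∑ k ∈ Finset.univ.filter (fun v => Conn G d j v), m1 (Sum.inl k)
            = ∑ k ∈ Finset.univ.filter (fun v => Conn G d j v), m' (Sum.inl k) := by
        intro j
        rw [← H j]
        have hmemiff : a ∈ Finset.univ.filter (fun v => Conn G d j v)
            ↔ b ∈ Finset.univ.filter (fun v => Conn G d j v) := by
          simp only [Finset.mem_filter, Finset.mem_univ, true_and]
          exact ⟨fun h => h.trans hab, fun h => h.trans hab.symm⟩
        calc ∑ k ∈ Finset.univ.filter (fun v => Conn G d j v), m1 (Sum.inl k)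
            = (∑ k ∈ Finset.univ.filter (fun v => Conn G d j v), u (Sum.inl k))
              + ∑ k ∈ Finset.univ.filter (fun v => Conn G d j v), (if b = k then 1 else 0) := by
              rw [← Finset.sum_add_distrib]
              exact Finset.sum_congr rfl fun k _ => hm1x k
          _ = (∑ k ∈ Finset.univ.filter (fun v => Conn G d j v), u (Sum.inl k))
              + ∑ k ∈ Finset.univ.filter (fun v => Conn G d j v), (if a = k then 1 else 0) := by
              congr 1
              rw [Finset.sum_ite_eq, Finset.sum_ite_eq]
              by_cases hbmem : b ∈ Finset.univ.filter (fun v => Conn G d j v)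
              · rw [if_pos hbmem, if_pos (hmemiff.mpr hbmem)]
              · rw [if_neg hbmem, if_neg (fun h => hbmem (hmemiff.mp h))]
          _ = ∑ k ∈ Finset.univ.filter (fun v => Conn G d j v), m (Sum.inl k) := by
              rw [← Finset.sum_add_distrib]
              exact (Finset.sum_congr rfl fun k _ => (hmx k)).symm
      -- the discrepancy strictly decreases
      have hdec : (∑ j : Fin n, ((m1 (Sum.inl j) - m' (Sum.inl j)) + (m' (Sum.inl j) - m1 (Sum.inl j)))) < N := by
        rw [← hN]
        have hterm : ∀ j : Fin n, j ≠ a → j ≠ b →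
            ((m1 (Sum.inl j) - m' (Sum.inl j)) + (m' (Sum.inl j) - m1 (Sum.inl j)))
            = ((m (Sum.inl j) - m' (Sum.inl j)) + (m' (Sum.inl j) - m (Sum.inl j))) := by
          intro j hja hjb
          rw [hm1x j, hmx j, if_neg (fun h => hjb h.symm), if_neg (fun h => hja h.symm)]
        have hA : m1 (Sum.inl a) + 1 = m (Sum.inl a) := by
          rw [hm1x a, hmx a, if_neg (fun h => hane h.symm), if_pos rfl]
        have hB : m1 (Sum.inl b) = m (Sum.inl b) + 1 := by
          rw [hm1x b, hmx b, if_pos rfl, if_neg hane]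
        classical
        rw [← Finset.sum_erase_add _ _ (Finset.mem_univ a),
            ← Finset.sum_erase_add _ _ (Finset.mem_univ a)]
        have hbmem : b ∈ Finset.univ.erase a := Finset.mem_erase.mpr ⟨fun h => hane h.symm, Finset.mem_univ _⟩
        rw [← Finset.sum_erase_add _ _ hbmem, ← Finset.sum_erase_add _ _ hbmem]
        have hsame : ∑ j ∈ (Finset.univ.erase a).erase b,
            ((m1 (Sum.inl j) - m' (Sum.inl j)) + (m' (Sum.inl j) - m1 (Sum.inl j)))
            = ∑ j ∈ (Finset.univ.erase a).erase b,
            ((m (Sum.inl j) - m' (Sum.inl j)) + (m' (Sum.inl j) - m (Sum.inl j))) := by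
          refine Finset.sum_congr rfl fun j hj => ?_
          obtain ⟨hjb, hja, _⟩ : j ≠ b ∧ j ≠ a ∧ True := by
            rw [Finset.mem_erase, Finset.mem_erase] at hj
            exact ⟨hj.1, hj.2.1, trivial⟩
          exact hterm j hja hjb
        rw [hsame]
        omega
      exact hroute.trans (ih _ hdec hm1deg H1 rfl)


/-! ### Invariance of class sums along Equi -/

lemma step_filter_sum {G : SimpleGraph (Fin n)} {w w' : M n} (hs : Step G w w')
    (T : Fin n → Prop)
    (hT : ∀ a b, G.Adj a b → mdeg w a ≠ 0 → mdeg w b ≠ 0 → (T a ↔ T b)) :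
    ∑ k ∈ Finset.univ.filter T, w (Sum.inl k) = ∑ k ∈ Finset.univ.filter T, w' (Sum.inl k) := by
  classical
  obtain ⟨j, k, u, hadj, rfl, rfl⟩ := hs
  have hdegj : mdeg (u + ex j + ey k) j ≠ 0 := by
    simp [mdeg_add, mdeg_ex, mdeg_ey]
  have hdegk : mdeg (u + ex j + ey k) k ≠ 0 := by
    simp [mdeg_add, mdeg_ex, mdeg_ey]
  have hiff := hT j k hadj hdegj hdegk
  have hx1 : ∀ v : Fin n, (u + ex j + ey k) (Sum.inl v) = u (Sum.inl v) + (if j = v then 1 else 0) := by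
    intro v
    simp [ex, ey, Finsupp.add_apply, Finsupp.single_apply]
  have hx2 : ∀ v : Fin n, (u + ex k + ey j) (Sum.inl v) = u (Sum.inl v) + (if k = v then 1 else 0) := by
    intro v
    simp [ex, ey, Finsupp.add_apply, Finsupp.single_apply]
  calc ∑ v ∈ Finset.univ.filter T, (u + ex j + ey k) (Sum.inl v)
      = (∑ v ∈ Finset.univ.filter T, u (Sum.inl v))
        + ∑ v ∈ Finset.univ.filter T, (if j = v then 1 else 0) := by
        rw [← Finset.sum_add_distrib]; exact Finset.sum_congr rfl fun v _ => hx1 v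
    _ = (∑ v ∈ Finset.univ.filter T, u (Sum.inl v))
        + ∑ v ∈ Finset.univ.filter T, (if k = v then 1 else 0) := by
        congr 1
        rw [Finset.sum_ite_eq, Finset.sum_ite_eq]
        simp only [Finset.mem_filter, Finset.mem_univ, true_and]
        by_cases hj : T j
        · rw [if_pos hj, if_pos (hiff.mp hj)]
        · rw [if_neg hj, if_neg (fun h => hj (hiff.mpr h))]
    _ = ∑ v ∈ Finset.univ.filter T, (u + ex k + ey j) (Sum.inl v) := by
        rw [← Finset.sum_add_distrib]; exact (Finset.sum_congr rfl fun v _ => (hx2 v)).symm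

lemma equi_filter_sum {G : SimpleGraph (Fin n)} {m m' : M n} (h : Equi G m m')
    (T : Fin n → Prop)
    (hT : ∀ a b, G.Adj a b → mdeg m a ≠ 0 → mdeg m b ≠ 0 → (T a ↔ T b)) :
    ∑ k ∈ Finset.univ.filter T, m (Sum.inl k) = ∑ k ∈ Finset.univ.filter T, m' (Sum.inl k) := by
  classical
  induction h with
  | refl => rfl
  | @tail b c hs hstep ih =>
    rw [ih]
    refine step_filter_sum hstep T ?_
    have hmb : mdeg m = mdeg b := Equi.mdeg_eq hs
    intro a b' hadj h1 h2
    exact hT a b' hadj (hmb ▸ h1) (hmb ▸ h2)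


/-! ### Cycle-specific lemmas -/

section Cycle
variable [NeZero n]

lemma one_ne_zero' (hn : 3 ≤ n) : (1 : Fin n) ≠ 0 := by
  simp [Fin.ext_iff, Nat.mod_eq_of_lt (show 1 < n by omega)]

lemma cyc_adj_succ (hn : 3 ≤ n) (a : Fin n) : (cycG n).Adj a (a+1) := by
  refine (SimpleGraph.fromRel_adj _ _ _).mpr ⟨?_, Or.inl rfl⟩
  intro h
  exact one_ne_zero' hn (left_eq_add.mp h)

lemma cyc_adj_pred (hn : 3 ≤ n) (i : Fin n) : (cycG n).Adj (i-1) i := by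
  have := cyc_adj_succ hn (i-1)
  rwa [sub_add_cancel] at this

lemma sub_one_ne_add_one (hn : 3 ≤ n) (i : Fin n) : i - 1 ≠ i + 1 := by
  intro h
  have h2 : (i+1) - (i-1) = 0 := by rw [← h]; exact sub_self _
  have h3 : (i+1) - (i-1) = 1 + 1 := by abel
  rw [h3] at h2
  have := congrArg Fin.val h2
  rw [Fin.val_add] at this
  simp [Fin.val_one', Nat.mod_eq_of_lt (show 1 < n by omega),
    Nat.mod_eq_of_lt (show 2 < n by omega)] at this

lemma adj_to_i (hn : 3 ≤ n) {a i : Fin n} (h : (cycG n).Adj a i) : a = i - 1 ∨ a = i + 1 := by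
  rcases (SimpleGraph.fromRel_adj _ _ _).mp h with ⟨hne, h1 | h1⟩
  · exact Or.inl (eq_sub_of_add_eq h1.symm)
  · exact Or.inr h1

/-- Lifting a step of the chorded graph to the cycle after multiplying by `x_i`. -/
lemma lift_step (hn : 3 ≤ n) (i : Fin n) {a b : M n}
    (hs : Step (cycG n ⊔ SimpleGraph.fromRel (fun a b => a = i - 1 ∧ b = i + 1)) a b) :
    Equi (cycG n) (a + ex i) (b + ex i) := by
  obtain ⟨j, k, u, hadj, rfl, rfl⟩ := hs
  rcases (SimpleGraph.sup_adj _ _ _ _).mp hadj with hc | hc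
  · have e1 : u + ex j + ey k + ex i = (u + ex i) + ex j + ey k := by abel
    have e2 : u + ex k + ey j + ex i = (u + ex i) + ex k + ey j := by abel
    rw [e1, e2]
    exact Relation.ReflTransGen.single ⟨j, k, u + ex i, hc, rfl, rfl⟩
  · rcases (SimpleGraph.fromRel_adj _ _ _).mp hc with ⟨hne, ⟨rfl, rfl⟩ | ⟨rfl, rfl⟩⟩
    · -- j = i-1, k = i+1
      have e1 : u + ex (i-1) + ey (i+1) + ex i = (u + ex (i-1)) + ex i + ey (i+1) := by abel
      have s1 : Step (cycG n) ((u + ex (i-1)) + ex i + ey (i+1))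
          ((u + ex (i-1)) + ex (i+1) + ey i) :=
        ⟨i, i+1, u + ex (i-1), cyc_adj_succ hn i, rfl, rfl⟩
      have e2 : (u + ex (i-1)) + ex (i+1) + ey i = (u + ex (i+1)) + ex (i-1) + ey i := by abel
      have s2 : Step (cycG n) ((u + ex (i+1)) + ex (i-1) + ey i)
          ((u + ex (i+1)) + ex i + ey (i-1)) :=
        ⟨i-1, i, u + ex (i+1), cyc_adj_pred hn i, rfl, rfl⟩
      have e3 : (u + ex (i+1)) + ex i + ey (i-1) = u + ex (i+1) + ey (i-1) + ex i := by abel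
      rw [e1, ← e3]
      exact (Relation.ReflTransGen.single s1).trans (e2 ▸ Relation.ReflTransGen.single s2)
    · -- j = i+1, k = i-1
      have e1 : u + ex (i+1) + ey (i-1) + ex i = (u + ex (i+1)) + ex i + ey (i-1) := by abel
      have s1 : Step (cycG n) ((u + ex (i+1)) + ex i + ey (i-1))
          ((u + ex (i+1)) + ex (i-1) + ey i) :=
        ⟨i, i-1, u + ex (i+1), (cyc_adj_pred hn i).symm, rfl, rfl⟩
      have e2 : (u + ex (i+1)) + ex (i-1) + ey i = (u + ex (i-1)) + ex (i+1) + ey i := by abel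
      have s2 : Step (cycG n) ((u + ex (i-1)) + ex (i+1) + ey i)
          ((u + ex (i-1)) + ex i + ey (i+1)) :=
        ⟨i+1, i, u + ex (i-1), (cyc_adj_succ hn i).symm, rfl, rfl⟩
      have e3 : (u + ex (i-1)) + ex i + ey (i+1) = u + ex (i-1) + ey (i+1) + ex i := by abel
      rw [e1, ← e3]
      exact (Relation.ReflTransGen.single s1).trans (e2 ▸ Relation.ReflTransGen.single s2)

lemma lift_equi (hn : 3 ≤ n) (i : Fin n) {a b : M n}
    (h : Equi (cycG n ⊔ SimpleGraph.fromRel (fun a b => a = i - 1 ∧ b = i + 1)) a b) :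
    Equi (cycG n) (a + ex i) (b + ex i) := by
  induction h with
  | refl => exact Equi.refl _ _
  | tail hs hstep ih => exact ih.trans (lift_step hn i hstep)

/-- If the multidegree misses `i-1` or `i+1`, chord steps cannot occur. -/
lemma chordfree_equi (hn : 3 ≤ n) (i : Fin n) {a b : M n}
    (h : Equi (cycG n ⊔ SimpleGraph.fromRel (fun a b => a = i - 1 ∧ b = i + 1)) a b)
    (hfree : mdeg a (i-1) = 0 ∨ mdeg a (i+1) = 0) : Equi (cycG n) a b := by
  induction h with
  | refl => exact Equi.refl _ _
  | @tail b' c hs hstep ih =>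
    refine ih.trans (Relation.ReflTransGen.single ?_)
    obtain ⟨j, k, u, hadj, h1, h2⟩ := hstep
    rcases (SimpleGraph.sup_adj _ _ _ _).mp hadj with hc | hc
    · exact ⟨j, k, u, hc, h1, h2⟩
    · exfalso
      have hmb : mdeg b' = mdeg a := (Equi.mdeg_eq hs).symm
      have hj : mdeg b' j ≠ 0 := by
        rw [h1]; simp [mdeg_add, mdeg_ex, mdeg_ey]
      have hk : mdeg b' k ≠ 0 := by
        rw [h1]; simp [mdeg_add, mdeg_ex, mdeg_ey]
      rcases (SimpleGraph.fromRel_adj _ _ _).mp hc with ⟨hne, ⟨rfl, rfl⟩ | ⟨rfl, rfl⟩⟩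
      · rcases hfree with hf | hf
        · exact hj (by rw [hmb]; exact hf)
        · exact hk (by rw [hmb]; exact hf)
      · rcases hfree with hf | hf
        · exact hk (by rw [hmb]; exact hf)
        · exact hj (by rw [hmb]; exact hf)

end Cycle


section Cycle2
variable [NeZero n]

lemma connG'_to_cyc (hn : 3 ≤ n) (i : Fin n) {d d' : Fin n → ℕ}
    (hdd : ∀ v, d v ≠ 0 → d' v ≠ 0) (hdi : d' i ≠ 0) {j v : Fin n}
    (h : Conn (cycG n ⊔ SimpleGraph.fromRel (fun a b => a = i - 1 ∧ b = i + 1)) d j v) :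
    Conn (cycG n) d' j v := by
  induction h with
  | refl => exact Relation.ReflTransGen.refl
  | @tail b c hs hstep ih =>
    obtain ⟨hadj, hb, hc⟩ := hstep
    rcases (SimpleGraph.sup_adj _ _ _ _).mp hadj with hcyc | hch
    · exact ih.trans (Relation.ReflTransGen.single ⟨hcyc, hdd _ hb, hdd _ hc⟩)
    · rcases (SimpleGraph.fromRel_adj _ _ _).mp hch with ⟨hne, ⟨rfl, rfl⟩ | ⟨rfl, rfl⟩⟩
      · exact ih.trans ((Relation.ReflTransGen.single ⟨cyc_adj_pred hn i, hdd _ hb, hdi⟩).trans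
          (Relation.ReflTransGen.single ⟨cyc_adj_succ hn i, hdi, hdd _ hc⟩))
      · exact ih.trans ((Relation.ReflTransGen.single ⟨(cyc_adj_succ hn i).symm, hdd _ hb, hdi⟩).trans
          (Relation.ReflTransGen.single ⟨(cyc_adj_pred hn i).symm, hdi, hdd _ hc⟩))

lemma connG'_ne_i (i : Fin n) {d : Fin n → ℕ} (hdi : d i = 0) {j v : Fin n} (hj : j ≠ i)
    (h : Conn (cycG n ⊔ SimpleGraph.fromRel (fun a b => a = i - 1 ∧ b = i + 1)) d j v) :
    v ≠ i := by
  induction h with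
  | refl => exact hj
  | @tail b c hs hstep ih =>
    rintro rfl
    exact hstep.2.2 hdi

lemma conncyc_to_G' (hn : 3 ≤ n) (i : Fin n) {d : Fin n → ℕ} (hdi : d i = 0) {j v : Fin n}
    (hv : v ≠ i)
    (h : Conn (cycG n) (fun w => d w + (if i = w then 1 else 0)) j v) (hj : j ≠ i) :
    Conn (cycG n ⊔ SimpleGraph.fromRel (fun a b => a = i - 1 ∧ b = i + 1)) d j v := by
  set G' := cycG n ⊔ SimpleGraph.fromRel (fun a b => a = i - 1 ∧ b = i + 1) with hG'
  set d' := fun w => d w + (if i = w then 1 else 0) with hd'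
  have hne' : ∀ w, w ≠ i → d' w ≠ 0 → d w ≠ 0 := by
    intro w hw h0
    have he : d' w = d w := by
      simp [hd', show ¬ i = w from fun h => hw h.symm]
    rwa [he] at h0
  have main : (j ≠ i → Conn G' d j v) ∧
      (j = i → ∀ b, (b = i - 1 ∨ b = i + 1) → d b ≠ 0 → Conn G' d b v) := by
    clear hj
    induction h using Relation.ReflTransGen.head_induction_on with
    | refl =>
      constructor
      · intro _
        exact Relation.ReflTransGen.refl
      · intro hvi
        exact absurd hvi hv
    | head hrel hrest ih =>
      rename_i a p
      obtain ⟨hadj, hda, hdp⟩ := hrel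
      constructor
      · intro ha
        by_cases hp : p = i
        · subst hp
          rcases adj_to_i hn hadj with h1 | h1
          · exact ih.2 rfl a (Or.inl h1) (hne' a ha hda)
          · exact ih.2 rfl a (Or.inr h1) (hne' a ha hda)
        · refine Relation.ReflTransGen.trans (Relation.ReflTransGen.single ?_) (ih.1 hp)
          exact ⟨(le_sup_left : cycG n ≤ G') hadj, hne' a ha hda, hne' p hp hdp⟩
      · intro ha b hb hdb
        rw [ha] at hadj
        have hpne : p ≠ i := hadj.ne'
        have hdp' : d p ≠ 0 := hne' p hpne hdp
        have hcp : Conn G' d p v := ih.1 hpne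
        by_cases hbp : b = p
        · exact hbp ▸ hcp
        · have hp1 : p = i - 1 ∨ p = i + 1 := adj_to_i hn hadj.symm
          have hchord : (SimpleGraph.fromRel fun a b => a = i - 1 ∧ b = i + 1).Adj b p := by
            refine (SimpleGraph.fromRel_adj _ _ _).mpr ⟨hbp, ?_⟩
            rcases hb with rfl | rfl <;> rcases hp1 with rfl | rfl
            · exact absurd rfl hbp
            · exact Or.inl ⟨rfl, rfl⟩
            · exact Or.inr ⟨rfl, rfl⟩
            · exact absurd rfl hbp
          exact Relation.ReflTransGen.trans (Relation.ReflTransGen.single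
            ⟨(le_sup_right : SimpleGraph.fromRel
                (fun a b => a = i - 1 ∧ b = i + 1) ≤ G') hchord, hdb, hdp'⟩) hcp
  exact main.1 hj

lemma sum_add_exi (i : Fin n) (m : M n) (S : Finset (Fin n)) :
    ∑ v ∈ S, (m + ex i) (Sum.inl v)
      = (∑ v ∈ S, m (Sum.inl v)) + (if i ∈ S then 1 else 0) := by
  classical
  have h1 : ∀ v : Fin n, (m + ex i) (Sum.inl v) = m (Sum.inl v) + (if i = v then 1 else 0) := by
    intro v; simp [ex, Finsupp.add_apply, Finsupp.single_apply]
  calc ∑ v ∈ S, (m + ex i) (Sum.inl v)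
      = ∑ v ∈ S, (m (Sum.inl v) + (if i = v then 1 else 0)) :=
        Finset.sum_congr rfl fun v _ => h1 v
    _ = (∑ v ∈ S, m (Sum.inl v)) + ∑ v ∈ S, (if i = v then 1 else 0) :=
        Finset.sum_add_distrib
    _ = (∑ v ∈ S, m (Sum.inl v)) + (if i ∈ S then 1 else 0) := by rw [Finset.sum_ite_eq]

/-- The key lemma: divisibility of the whole chain by `x_i` lets us descend to the
chorded graph. -/
lemma key_equi (hn : 3 ≤ n) (i : Fin n) {m m0 : M n}
    (h : Equi (cycG n) (m + ex i) (m0 + ex i)) :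
    Equi (cycG n ⊔ SimpleGraph.fromRel (fun a b => a = i - 1 ∧ b = i + 1)) m m0 := by
  classical
  set G' := cycG n ⊔ SimpleGraph.fromRel (fun a b => a = i - 1 ∧ b = i + 1) with hG'
  set d := mdeg m with hd
  set d' := fun w => d w + (if i = w then 1 else 0) with hd'
  have hdd : ∀ w, d w ≠ 0 → d' w ≠ 0 := by
    intro w hw
    simp only [hd']
    by_cases hiw : i = w <;> simp [hiw] <;> omega
  have hddr : ∀ w, w ≠ i → d' w ≠ 0 → d w ≠ 0 := by
    intro w hw h0
    have he : d' w = d w := by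
      simp [hd', show ¬ i = w from fun h => hw h.symm]
    rwa [he] at h0
  have hmd : mdeg (m + ex i) = d' := by
    funext v
    simp [mdeg_add, mdeg_ex, hd', hd]
  have hd0 : mdeg m0 = d := by
    funext v
    have := congrFun h.mdeg_eq v
    simp only [mdeg_add, mdeg_ex] at this
    have h2 : mdeg m v = d v := by rw [hd]
    omega
  have hinv : ∀ j : Fin n,
      ∑ k ∈ Finset.univ.filter (fun v => Conn (cycG n) d' j v), m (Sum.inl k)
        = ∑ k ∈ Finset.univ.filter (fun v => Conn (cycG n) d' j v), m0 (Sum.inl k) := by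
    intro j
    have hT : ∀ a b, (cycG n).Adj a b → mdeg (m + ex i) a ≠ 0 → mdeg (m + ex i) b ≠ 0 →
        ((fun v => Conn (cycG n) d' j v) a ↔ (fun v => Conn (cycG n) d' j v) b) := by
      intro a b hadj ha hb
      rw [hmd] at ha hb
      exact ⟨fun t => t.trans (Relation.ReflTransGen.single ⟨hadj, ha, hb⟩),
        fun t => t.trans (Relation.ReflTransGen.single ⟨hadj.symm, hb, ha⟩)⟩
    have hsum := equi_filter_sum h (fun v => Conn (cycG n) d' j v) hT
    rw [sum_add_exi, sum_add_exi] at hsum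
    omega
  refine match_equi (d := d) hd.symm hd0 ?_
  intro j
  by_cases hdj : d j = 0
  · have hset : Finset.univ.filter (fun v => Conn G' d j v) = {j} := by
      ext v
      simp only [Finset.mem_filter, Finset.mem_univ, true_and, Finset.mem_singleton]
      constructor
      · intro hc
        rcases Relation.ReflTransGen.cases_head hc with h1 | ⟨c, hrel, _⟩
        · exact h1.symm
        · exact absurd hdj hrel.2.1
      · rintro rfl
        exact Relation.ReflTransGen.refl
    rw [hset]
    simp only [Finset.sum_singleton]
    have h1 : m (Sum.inl j) = 0 := Nat.le_zero.mp (by rw [← hdj, hd]; exact xle m j)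
    have h2 : m0 (Sum.inl j) = 0 := Nat.le_zero.mp (by rw [← hdj, ← hd0]; exact xle m0 j)
    rw [h1, h2]
  · by_cases hdi : d i = 0
    · have hji : j ≠ i := by rintro rfl; exact hdj hdi
      have hdi' : d' i ≠ 0 := by
        have he : d' i = d i + 1 := by simp [hd']
        omega
      have hseq : Finset.univ.filter (fun v => Conn G' d j v)
          = (Finset.univ.filter (fun v => Conn (cycG n) d' j v)).filter (fun v => v ≠ i) := by
        ext v
        simp only [Finset.mem_filter, Finset.mem_univ, true_and]
        constructor
        · intro hc
          exact ⟨connG'_to_cyc hn i hdd hdi' hc, connG'_ne_i i hdi hji hc⟩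
        · rintro ⟨hc, hvne⟩
          exact conncyc_to_G' hn i hdi hvne hc hji
      have hsub : ∀ (mm : M n), mdeg mm = d →
          ∑ k ∈ Finset.univ.filter (fun v => Conn G' d j v), mm (Sum.inl k)
            = ∑ k ∈ Finset.univ.filter (fun v => Conn (cycG n) d' j v), mm (Sum.inl k) := by
        intro mm hmm
        rw [hseq]
        refine Finset.sum_subset (Finset.filter_subset _ _) ?_
        intro v hv hv2
        have : v = i := by
          rcases Classical.em (v = i) with h1 | h1
          · exact h1
          · exact absurd (Finset.mem_filter.mpr ⟨hv, h1⟩) hv2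
        subst this
        exact Nat.le_zero.mp (by rw [← hdi, ← hmm]; exact xle mm v)
      rw [hsub m hd.symm, hsub m0 hd0]
      exact hinv j
    · have hiff : ∀ v, Conn G' d j v ↔ Conn (cycG n) d' j v := by
        intro v
        constructor
        · exact connG'_to_cyc hn i hdd (hdd i hdi)
        · intro hc
          refine Relation.ReflTransGen.lift id ?_ _ _ hc
          rintro a b ⟨hadj, ha, hb⟩
          refine ⟨(le_sup_left : cycG n ≤ G') hadj, ?_, ?_⟩
          · rcases eq_or_ne a i with rfl | hne
            · exact hdi
            · exact hddr a hne ha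
          · rcases eq_or_ne b i with rfl | hne
            · exact hdi
            · exact hddr b hne hb
      have hfeq : Finset.univ.filter (fun v => Conn G' d j v)
          = Finset.univ.filter (fun v => Conn (cycG n) d' j v) :=
        Finset.filter_congr fun v _ => by rw [hiff v]
      rw [hfeq]
      exact hinv j

end Cycle2


/-! ### The colon ideal computation -/

lemma exists_partner {G : SimpleGraph (Fin n)} {f : PolyRing n} {m : M n}
    (hz : clsSum G m f = 0) (hm : m ∈ f.support) :
    ∃ m'' ∈ f.support, m'' ≠ m ∧ Equi G m m'' := by
  classical
  by_contra hno
  push_neg at hno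
  rw [clsSum, Finset.sum_eq_single_of_mem m hm ?_] at hz
  · rw [if_pos (Equi.refl G m)] at hz
    exact mem_support_iff.mp hm hz
  · intro b hb hbne
    rcases Classical.em (Equi G m b) with hE | hE
    · exact absurd hE (hno b hb hbne)
    · rw [if_neg hE]

section Colon
variable [NeZero n]

theorem colon_eq (hn : 3 ≤ n) (i : Fin n) :
    Submodule.colon (beIdeal (cycG n)) (Ideal.span {(X (Sum.inl i) : PolyRing n)}) =
      beIdeal (cycG n ⊔ SimpleGraph.fromRel (fun a b => a = i - 1 ∧ b = i + 1)) := by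
  apply le_antisymm
  · -- (J : x_i) ⊆ J_{C_n^i}
    intro g hg
    have hX : (X (Sum.inl i) : PolyRing n) ∈ Ideal.span {(X (Sum.inl i) : PolyRing n)} :=
      Ideal.subset_span rfl
    have hmul : g * X (Sum.inl i) ∈ beIdeal (cycG n) := by
      have := Submodule.mem_colon.mp hg _ hX
      rwa [smul_eq_mul] at this
    rw [mem_beIdeal_iff] at hmul ⊢
    intro m0
    have hs := hmul (m0 + ex i)
    rw [clsSum, support_mul_X, Finset.sum_map] at hs
    rw [clsSum]
    rw [← hs]
    refine Finset.sum_congr rfl fun m hm => ?_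
    have hemb : (addRightEmbedding (Finsupp.single (Sum.inl i) 1)) m = m + ex i := rfl
    rw [hemb]
    have hco : (g * X (Sum.inl i)).coeff (m + ex i) = g.coeff m := coeff_mul_X m (Sum.inl i) g
    rw [hco]
    congr 1
    refine propext ⟨fun hE => lift_equi hn i hE, fun hE => key_equi hn i hE⟩
  · -- J_{C_n^i} ⊆ (J : x_i)
    have memJ : ∀ a b : Fin n, (cycG n).Adj a b → fij a b ∈ beIdeal (cycG n) := by
      intro a b h
      exact Ideal.subset_span ⟨a, b, h, rfl⟩
    rw [beIdeal, Ideal.span_le]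
    rintro g ⟨a, b, hab, rfl⟩
    rw [SetLike.mem_coe, Submodule.mem_colon]
    intro p hp
    rw [SetLike.mem_coe, Ideal.mem_span_singleton] at hp
    obtain ⟨c, rfl⟩ := hp
    rw [smul_eq_mul]
    rcases (SimpleGraph.sup_adj _ _ _ _).mp hab with h | h
    · exact Ideal.mul_mem_right _ _ (memJ a b h)
    · rcases ((SimpleGraph.fromRel_adj _ _ _).mp h).2 with ⟨rfl, rfl⟩ | ⟨rfl, rfl⟩
      · have key : fij (i-1) (i+1) * (X (Sum.inl i) * c) =
            (c * X (Sum.inl (i-1))) * fij i (i+1) - (c * X (Sum.inl (i+1))) * fij i (i-1) := by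
          unfold fij
          ring
        rw [key]
        exact sub_mem (Ideal.mul_mem_left _ _ (memJ _ _ (cyc_adj_succ hn i)))
          (Ideal.mul_mem_left _ _ (memJ _ _ (cyc_adj_pred hn i).symm))
      · have key : fij (i+1) (i-1) * (X (Sum.inl i) * c) =
            (c * X (Sum.inl (i+1))) * fij i (i-1) - (c * X (Sum.inl (i-1))) * fij i (i+1) := by
          unfold fij
          ring
        rw [key]
        exact sub_mem (Ideal.mul_mem_left _ _ (memJ _ _ (cyc_adj_pred hn i).symm))
          (Ideal.mul_mem_left _ _ (memJ _ _ (cyc_adj_succ hn i)))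

end Colon


/-! ### The initial ideal containment -/

lemma factor2 {m : M n} {a b : Fin n ⊕ Fin n} (ha : 1 ≤ m a) (hb : 1 ≤ m b) (hab : a ≠ b) :
    (m - Finsupp.single a 1 - Finsupp.single b 1) + (Finsupp.single a 1 + Finsupp.single b 1)
      = m := by
  ext w
  simp only [Finsupp.add_apply, Finsupp.tsub_apply, Finsupp.single_apply]
  by_cases haw : a = w <;> by_cases hbw : b = w
  · exact absurd (haw.trans hbw.symm) hab
  · subst haw; simp [hbw]; omega
  · subst hbw; simp [haw, fun h => hab h]; omega
  · simp [haw, hbw]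

lemma support_pair {m m'' : M n} (hne : m'' ≠ m) :
    ((monomial m (1:ℂ)) - monomial m'' 1).support = {m, m''} := by
  classical
  ext w
  simp only [mem_support_iff, coeff_sub, coeff_monomial, Finset.mem_insert,
    Finset.mem_singleton]
  by_cases h1 : m = w <;> by_cases h2 : m'' = w
  · exact absurd (h2.trans h1.symm) hne
  · simp [h1, h2]
  · simp [h1, h2]
  · simp [h1, h2, (show ¬ w = m from fun h => h1 h.symm),
      (show ¬ w = m'' from fun h => h2 h.symm)]

section Colon2
variable [NeZero n]

theorem inIdeal_le (hn : 3 ≤ n) (i : Fin n) :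
    inIdeal (Submodule.colon (beIdeal (cycG n)) (Ideal.span {(X (Sum.inl i) : PolyRing n)})) ≤
      inIdeal (beIdeal (cycG n)) ⊔
        Ideal.span {(X (Sum.inl (i - 1)) : PolyRing n), X (Sum.inr (i - 1))} *
          Ideal.span {(X (Sum.inl (i + 1)) : PolyRing n), X (Sum.inr (i + 1))} := by
  classical
  rw [colon_eq hn i, inIdeal, Ideal.span_le]
  rintro g ⟨f, hf, m, hlead, rfl⟩
  rw [SetLike.mem_coe]
  by_cases hP : mdeg m (i-1) ≠ 0 ∧ mdeg m (i+1) ≠ 0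
  · -- the monomial is divisible by a variable at i-1 and one at i+1
    obtain ⟨h1, h2⟩ := hP
    have ha : ∃ a, 1 ≤ m a ∧ (a = Sum.inl (i-1) ∨ a = Sum.inr (i-1)) := by
      rw [mdeg] at h1
      rcases Nat.pos_of_ne_zero h1 |> fun h => (Nat.lt_of_lt_of_le h (le_refl _)) with h
      by_cases hx : 1 ≤ m (Sum.inl (i-1))
      · exact ⟨_, hx, Or.inl rfl⟩
      · exact ⟨_, by omega, Or.inr rfl⟩
    have hb : ∃ b, 1 ≤ m b ∧ (b = Sum.inl (i+1) ∨ b = Sum.inr (i+1)) := by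
      rw [mdeg] at h2
      by_cases hx : 1 ≤ m (Sum.inl (i+1))
      · exact ⟨_, hx, Or.inl rfl⟩
      · exact ⟨_, by omega, Or.inr rfl⟩
    obtain ⟨a, hma, haeq⟩ := ha
    obtain ⟨b, hmb, hbeq⟩ := hb
    have hne : i - 1 ≠ i + 1 := sub_one_ne_add_one hn i
    have hab : a ≠ b := by
      rcases haeq with rfl | rfl <;> rcases hbeq with rfl | rfl <;>
        simp [Sum.inl.injEq, Sum.inr.injEq, hne]
    have hfact : (monomial m (1:ℂ))
        = monomial (m - Finsupp.single a 1 - Finsupp.single b 1) 1 * (X a * X b) := by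
      rw [X, X, monomial_mul, monomial_mul, one_mul, one_mul, ← add_assoc,
        add_assoc (m - Finsupp.single a 1 - Finsupp.single b 1), factor2 hma hmb hab]
    have hXa : (X a : PolyRing n) ∈
        Ideal.span {(X (Sum.inl (i - 1)) : PolyRing n), X (Sum.inr (i - 1))} := by
      refine Ideal.subset_span ?_
      rcases haeq with rfl | rfl
      · exact Set.mem_insert _ _
      · exact Set.mem_insert_of_mem _ rfl
    have hXb : (X b : PolyRing n) ∈
        Ideal.span {(X (Sum.inl (i + 1)) : PolyRing n), X (Sum.inr (i + 1))} := by
      refine Ideal.subset_span ?_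
      rcases hbeq with rfl | rfl
      · exact Set.mem_insert _ _
      · exact Set.mem_insert_of_mem _ rfl
    rw [hfact]
    exact Submodule.mem_sup_right (Ideal.mul_mem_left _ _ (Ideal.mul_mem_mul hXa hXb))
  · -- chord steps cannot occur, so the lead monomial is already in in(J)
    have hfree : mdeg m (i-1) = 0 ∨ mdeg m (i+1) = 0 := by
      rcases not_and_or.mp hP with h | h
      · exact Or.inl (not_not.mp h)
      · exact Or.inr (not_not.mp h)
    have hz := (mem_beIdeal_iff _ f).mp hf m
    obtain ⟨m'', hm''s, hm''ne, hm''e⟩ := exists_partner hz hlead.1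
    have hcyc : Equi (cycG n) m m'' := chordfree_equi hn i hm''e hfree
    set f' : PolyRing n := monomial m 1 - monomial m'' 1 with hf'
    have hf'mem : f' ∈ beIdeal (cycG n) := equi_sub_monomial_mem hcyc
    have hsupp : f'.support = {m, m''} := support_pair hm''ne
    have hlead' : IsLeadExp n f' m := by
      constructor
      · rw [hsupp]
        exact Finset.mem_insert_self _ _
      · intro m' hm' hne'
        rw [hsupp, Finset.mem_insert, Finset.mem_singleton] at hm'
        rcases hm' with rfl | rfl
        · exact absurd rfl hne'
        · exact hlead.2 m' hm''s hm''ne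
    exact Submodule.mem_sup_left (Ideal.subset_span ⟨f', hf'mem, m, hlead', rfl⟩)

end Colon2

end BEI

/-- `(J_{C_n} : x_i) = J_{C_n^i}` and the containment of initial ideals. -/
theorem stmt9 {n : ℕ} [NeZero n] (hn : 3 ≤ n) (i : Fin n) :
    Submodule.colon (beIdeal (cycG n)) (Ideal.span {(X (Sum.inl i) : PolyRing n)}) =
      beIdeal (cycG n ⊔ SimpleGraph.fromRel (fun a b => a = i - 1 ∧ b = i + 1)) ∧
    inIdeal (Submodule.colon (beIdeal (cycG n)) (Ideal.span {(X (Sum.inl i) : PolyRing n)})) ≤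
      inIdeal (beIdeal (cycG n)) ⊔
        Ideal.span {(X (Sum.inl (i - 1)) : PolyRing n), X (Sum.inr (i - 1))} *
          Ideal.span {(X (Sum.inl (i + 1)) : PolyRing n), X (Sum.inr (i + 1))} :=
  ⟨BEI.colon_eq hn i, BEI.inIdeal_le hn i⟩
end

section
/- Let C_n be the cycle graph (n ≥ 3) with binomial edge ideal J_{C_n} over ℂ, and let S ∈ min(C_n) with |S| ≥ 3. Then v_{P_S}(J_{C_n}) ≥ n − |S|. -/
open MvPolynomial

variable {n : ℕ}

namespace VN
open SimpleGraph

variable {n : ℕ}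

lemma cyc_adj [NeZero n] {a b : Fin n} :
    (cycG n).Adj a b ↔ a ≠ b ∧ (b = a + 1 ∨ a = b + 1) := by
  simp [cycG, SimpleGraph.fromRel_adj]

/-- coordinate along the path obtained by deleting `w` from the cycle -/
def rho (w v : Fin n) : ℕ :=
  if w.val < v.val then v.val - w.val - 1 else v.val + n - w.val - 1

lemma succ_iff_val [NeZero n] (hn : 2 ≤ n) {a b : Fin n} :
    b = a + 1 ↔ (b.val = a.val + 1 ∨ (a.val = n - 1 ∧ b.val = 0)) := by
  have h1 : (1 : Fin n).val = 1 := by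
    have := Nat.one_mod_eq_one.mpr (by omega : n ≠ 1)
    simpa [Fin.val_one'] using this
  have hadd : (a + 1).val = (a.val + 1) % n := by
    rw [Fin.add_def, h1]
  have ha := a.isLt
  have hb := b.isLt
  constructor
  · intro h
    subst h
    rw [hadd]
    rcases Nat.lt_or_ge (a.val + 1) n with h' | h'
    · left; exact Nat.mod_eq_of_lt h'
    · right
      have : a.val + 1 = n := by omega
      rw [this, Nat.mod_self]; omega
  · intro h
    apply Fin.ext
    rw [hadd]
    rcases h with h | h
    · rw [Nat.mod_eq_of_lt (by omega)]; omega
    · have : a.val + 1 = n := by omega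
      rw [this, Nat.mod_self]; omega

lemma rho_lt (w v : Fin n) (hv : v ≠ w) : rho w v < n - 1 := by
  have hv' : v.val ≠ w.val := fun h => hv (Fin.ext h)
  have := v.isLt; have := w.isLt
  unfold rho; split <;> omega

lemma rho_inj {w v v' : Fin n} (h : rho w v = rho w v') : v = v' := by
  have := v.isLt; have := v'.isLt; have := w.isLt
  apply Fin.ext
  unfold rho at h; split at h <;> split at h <;> omega

lemma rho_adj [NeZero n] (hn : 3 ≤ n) {w a b : Fin n} (ha : a ≠ w) (hb : b ≠ w)
    (hab : (cycG n).Adj a b) : rho w b = rho w a + 1 ∨ rho w a = rho w b + 1 := by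
  have ha' : a.val ≠ w.val := fun h => ha (Fin.ext h)
  have hb' : b.val ≠ w.val := fun h => hb (Fin.ext h)
  have h1 := a.isLt; have h2 := b.isLt; have h3 := w.isLt
  rcases (cyc_adj.mp hab) with ⟨hne, h | h⟩
  · rcases (succ_iff_val (by omega)).mp h with h' | h' <;> (unfold rho; split <;> split <;> omega)
  · rcases (succ_iff_val (by omega)).mp h with h' | h' <;> (unfold rho; split <;> split <;> omega)

lemma walk_ivt [NeZero n] (hn : 3 ≤ n) {w : Fin n} {a b : Fin n} (p : (cycG n).Walk a b)
    (hw : w ∉ p.support) :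
    ∀ k, min (rho w a) (rho w b) ≤ k → k ≤ max (rho w a) (rho w b) →
      ∃ v ∈ p.support, rho w v = k := by
  induction p with
  | nil =>
    intro k h1 h2
    exact ⟨_, SimpleGraph.Walk.start_mem_support _, by omega⟩
  | @cons a c b h p ih =>
    intro k h1 h2
    simp only [SimpleGraph.Walk.support_cons, List.mem_cons] at hw
    push_neg at hw
    obtain ⟨hwa, hwp⟩ := hw
    have hc : c ≠ w := by
      intro h'; exact hwp (h' ▸ p.start_mem_support)
    have hadj := rho_adj hn (Ne.symm hwa) hc h
    by_cases hk : k = rho w a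
    · exact ⟨a, by simp, hk.symm⟩
    · have := ih hwp k (by omega) (by omega)
      obtain ⟨v, hv, hv'⟩ := this
      exact ⟨v, by simp [hv], hv'⟩

lemma excise_aux {V : Type*} {G : SimpleGraph V} {x : V}
    (hx : ∀ u v, G.Adj x u → G.Adj x v → u = v) :
    ∀ (N : ℕ) {a b : V} (p : G.Walk a b), p.length ≤ N → a ≠ x → b ≠ x →
      ∃ q : G.Walk a b, x ∉ q.support := by
  intro N
  induction N with
  | zero =>
    intro a b p hlen ha hb
    cases p with
    | nil => exact ⟨SimpleGraph.Walk.nil, by simpa using Ne.symm ha⟩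
    | cons h p => simp at hlen
  | succ N ih =>
    intro a b p hlen ha hb
    cases p with
    | nil => exact ⟨SimpleGraph.Walk.nil, by simpa using Ne.symm ha⟩
    | @cons _ c _ h p =>
      by_cases hc : c = x
      · subst hc
        cases p with
        | nil => exact absurd rfl hb
        | @cons _ y _ h2 p2 =>
          have hay : a = y := hx a y h.symm h2
          subst hay
          have hlen2 : p2.length ≤ N := by
            simp [SimpleGraph.Walk.length_cons] at hlen
            omega
          exact ih p2 (by omega) ha hb
      · obtain ⟨q, hq⟩ := ih p (by simp [SimpleGraph.Walk.length_cons] at hlen; omega) hc hb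
        refine ⟨SimpleGraph.Walk.cons h q, ?_⟩
        simp only [SimpleGraph.Walk.support_cons, List.mem_cons]
        push_neg
        exact ⟨Ne.symm ha, hq⟩

lemma excise {V : Type*} {G : SimpleGraph V} {x : V}
    (hx : ∀ u v, G.Adj x u → G.Adj x v → u = v) {a b : V} (p : G.Walk a b)
    (ha : a ≠ x) (hb : b ≠ x) : ∃ q : G.Walk a b, x ∉ q.support :=
  excise_aux hx p.length p le_rfl ha hb

end VN

namespace VN
open SimpleGraph

variable {n : ℕ}

section transfer
variable {V : Type*} {G : SimpleGraph V}

/-- inclusion homomorphism between induced subgraphs -/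
def inclHom {T T' : Set V} (h : T ⊆ T') : G.induce T →g G.induce T' where
  toFun := fun v => ⟨v.1, h v.2⟩
  map_rel' := fun hadj => hadj

lemma walk_transfer {T T' : Set V} {a b : ↥T'}
    (p : (G.induce T').Walk a b) (hall : ∀ v ∈ p.support, (v : V) ∈ T) :
    ∀ (ha : (a : V) ∈ T) (hb : (b : V) ∈ T), (G.induce T).Reachable ⟨a, ha⟩ ⟨b, hb⟩ := by
  induction p with
  | nil =>
    intro ha hb
    exact Reachable.refl _
  | @cons a c b h p ih =>
    intro ha hb
    have hc : (c : V) ∈ T := hall c (by simp)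
    have hadj : (G.induce T).Adj ⟨a, ha⟩ ⟨c, hc⟩ := h
    exact (hadj.reachable).trans
      (ih (fun v hv => hall v (by simp [hv])) hc hb)

lemma reachable_mono {T T' : Set V} (hTT : T ⊆ T') {a b : ↥T}
    (h : (G.induce T).Reachable a b) :
    (G.induce T').Reachable ⟨a, hTT a.2⟩ ⟨b, hTT b.2⟩ := by
  obtain ⟨p⟩ := h
  have := walk_transfer (T := T') (p.map (inclHom hTT))
    (fun v _ => v.2) (hTT a.2) (hTT b.2)
  exact this

end transfer

lemma cc_finite {T : Set (Fin n)} {G : SimpleGraph (Fin n)} :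
    Finite ((G.induce T).ConnectedComponent) := by
  have : Finite ↥T := Subtype.finite
  exact Finite.of_surjective (SimpleGraph.connectedComponentMk _)
    (fun c => c.exists_rep)

lemma sub_add_cancel' [NeZero n] (i : Fin n) : (i - 1) + 1 = i :=
  sub_add_cancel i 1

lemma indep_of_minSet [NeZero n] (hn : 3 ≤ n) {S : Set (Fin n)}
    (hS : S ∈ minSet (cycG n)) (hne : S.Nonempty) :
    ∀ i ∈ S, i + 1 ∉ S := by
  intro i hi hi1
  rcases hS with h | ⟨k, hk2, hSne, hSuniv, hknum, hmin⟩
  · exact absurd h (Set.nonempty_iff_ne_empty.mp hne)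
  have hlt := hmin i hi
  -- build injection comps(Sᶜ) → comps(Sᶜ ∪ {i})
  have hsub : Sᶜ ⊆ Sᶜ ∪ {i} := Set.subset_union_left
  have hiX : i ∈ Sᶜ ∪ {i} := Or.inr rfl
  set x : ↥(Sᶜ ∪ {i}) := ⟨i, hiX⟩ with hx
  have hxuniq : ∀ u v, ((cycG n).induce (Sᶜ ∪ {i})).Adj x u → ((cycG n).induce (Sᶜ ∪ {i})).Adj x v → u = v := by
    intro u v hu hv
    have key : ∀ w : ↥(Sᶜ ∪ {i}), ((cycG n).induce (Sᶜ ∪ {i})).Adj x w → (w : Fin n) = i - 1 := by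
      intro w hw
      have hadj : (cycG n).Adj i (w : Fin n) := hw
      rcases cyc_adj.mp hadj with ⟨hne', h | h⟩
      · -- w = i + 1 : impossible
        exfalso
        have hwS : (w : Fin n) ∈ Sᶜ ∪ {i} := w.2
        rcases hwS with hw' | hw'
        · rw [h] at hw'; exact hw' hi1
        · have hwi : (w : Fin n) = i := hw'
          rw [hwi] at hne'
          exact hne' rfl
      · -- i = w + 1, so w = i - 1
        exact eq_sub_of_add_eq h.symm
    apply Subtype.ext
    rw [key u hu, key v hv]
  have finj : Function.Injective
      (SimpleGraph.ConnectedComponent.map (inclHom hsub (G := cycG n))) := by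
    intro c d
    refine SimpleGraph.ConnectedComponent.ind₂ (fun u v => ?_) c d
    intro h
    simp only [SimpleGraph.ConnectedComponent.map_mk] at h
    have hreach := SimpleGraph.ConnectedComponent.exact h
    obtain ⟨p⟩ := hreach
    have hune : (inclHom (G := cycG n) hsub u) ≠ x := by
      intro h'
      have : (u : Fin n) = i := congrArg Subtype.val h'
      exact (u.2 : (u:Fin n) ∈ Sᶜ) (this ▸ hi)
    have hvne : (inclHom (G := cycG n) hsub v) ≠ x := by
      intro h'
      have : (v : Fin n) = i := congrArg Subtype.val h'
      exact (v.2 : (v:Fin n) ∈ Sᶜ) (this ▸ hi)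
    obtain ⟨q, hq⟩ := excise hxuniq p hune hvne
    have hall : ∀ w ∈ q.support, (w : Fin n) ∈ Sᶜ := by
      intro w hw
      rcases (w.2 : (w : Fin n) ∈ Sᶜ ∪ {i}) with h' | h'
      · exact h'
      · exfalso; apply hq
        have : w = x := Subtype.ext h'
        rwa [this] at hw
    have := walk_transfer q hall u.2 v.2
    exact SimpleGraph.ConnectedComponent.sound this
  have hle : numComp (cycG n) Sᶜ ≤ numComp (cycG n) (Sᶜ ∪ {i}) := by
    have : Finite (((cycG n).induce (Sᶜ ∪ {i})).ConnectedComponent) := cc_finite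
    exact Nat.card_le_card_of_injective _ finj
  omega

end VN

namespace VN
open MvPolynomial SimpleGraph

variable {n : ℕ}

/-- connected components of the graph induced on the complement of the kill-set `Z` -/
abbrev CompT (n : ℕ) [NeZero n] (Z : Set (Fin n)) := ((cycG n).induce Zᶜ).ConnectedComponent

/-- target ring of the parametrization -/
abbrev TR (n : ℕ) [NeZero n] (Z : Set (Fin n)) :=
  MvPolynomial (Fin n ⊕ (CompT n Z ⊕ CompT n Z)) ℂ

open scoped Classical in
noncomputable def phiVar [NeZero n] (Z : Set (Fin n)) : Fin n ⊕ Fin n → TR n Z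
  | Sum.inl w =>
      if h : w ∈ Zᶜ then
        X (Sum.inl w) * X (Sum.inr (Sum.inl (((cycG n).induce Zᶜ).connectedComponentMk ⟨w, h⟩)))
      else 0
  | Sum.inr w =>
      if h : w ∈ Zᶜ then
        X (Sum.inl w) * X (Sum.inr (Sum.inr (((cycG n).induce Zᶜ).connectedComponentMk ⟨w, h⟩)))
      else 0

noncomputable def phi [NeZero n] (Z : Set (Fin n)) : PolyRing n →ₐ[ℂ] TR n Z :=
  aeval (phiVar Z)

lemma phi_X_inl [NeZero n] (Z : Set (Fin n)) (w : Fin n) (h : w ∈ Zᶜ) :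
    phi Z (X (Sum.inl w)) =
      X (Sum.inl w) * X (Sum.inr (Sum.inl (((cycG n).induce Zᶜ).connectedComponentMk ⟨w, h⟩))) := by
  classical
  simp [phi, phiVar, h]

lemma phi_X_inr [NeZero n] (Z : Set (Fin n)) (w : Fin n) (h : w ∈ Zᶜ) :
    phi Z (X (Sum.inr w)) =
      X (Sum.inl w) * X (Sum.inr (Sum.inr (((cycG n).induce Zᶜ).connectedComponentMk ⟨w, h⟩))) := by
  classical
  simp [phi, phiVar, h]

lemma phi_X_inl_dead [NeZero n] (Z : Set (Fin n)) (w : Fin n) (h : w ∈ Z) :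
    phi Z (X (Sum.inl w)) = 0 := by
  have h' : ¬ w ∈ Zᶜ := by simpa using h
  classical
  simp [phi, phiVar, h']

lemma phi_X_inr_dead [NeZero n] (Z : Set (Fin n)) (w : Fin n) (h : w ∈ Z) :
    phi Z (X (Sum.inr w)) = 0 := by
  have h' : ¬ w ∈ Zᶜ := by simpa using h
  classical
  simp [phi, phiVar, h']

/-- `phi Z` kills `fij a b` as soon as `a, b` live in the same component of `Zᶜ`. -/
lemma phi_fij_same [NeZero n] (Z : Set (Fin n)) {a b : Fin n} (ha : a ∈ Zᶜ) (hb : b ∈ Zᶜ)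
    (hcomp : ((cycG n).induce Zᶜ).connectedComponentMk ⟨a, ha⟩ =
      ((cycG n).induce Zᶜ).connectedComponentMk ⟨b, hb⟩) :
    phi Z (fij a b) = 0 := by
  simp only [fij, map_sub, map_mul, phi_X_inl Z a ha, phi_X_inr Z b hb,
    phi_X_inl Z b hb, phi_X_inr Z a ha, hcomp]
  ring

lemma phi_fij_dead [NeZero n] (Z : Set (Fin n)) {a b : Fin n} (h : a ∈ Z ∨ b ∈ Z) :
    phi Z (fij a b) = 0 := by
  rcases h with h | h
  · simp [fij, map_sub, map_mul, phi_X_inl_dead Z a h, phi_X_inr_dead Z a h]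
  · simp [fij, map_sub, map_mul, phi_X_inl_dead Z b h, phi_X_inr_dead Z b h]

/-- a SameComp statement gives equality of connected components -/
lemma samecomp_mk [NeZero n] {T : Set (Fin n)} {a b : Fin n} (h : SameComp (cycG n) T a b) :
    ∃ (ha : a ∈ T) (hb : b ∈ T),
      ((cycG n).induce T).connectedComponentMk ⟨a, ha⟩ =
        ((cycG n).induce T).connectedComponentMk ⟨b, hb⟩ := by
  obtain ⟨ha, hb, hr⟩ := h
  exact ⟨ha, hb, SimpleGraph.ConnectedComponent.sound hr⟩

/-- J is killed by every parametrization -/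
lemma phi_J_zero [NeZero n] (Z : Set (Fin n)) {g : PolyRing n}
    (hg : g ∈ beIdeal (cycG n)) : phi Z g = 0 := by
  have : beIdeal (cycG n) ≤ RingHom.ker (phi Z).toRingHom := by
    apply Ideal.span_le.mpr
    rintro g' ⟨i, j, hadj, rfl⟩
    simp only [SetLike.mem_coe, RingHom.mem_ker]
    by_cases hi : i ∈ Z
    · exact phi_fij_dead Z (Or.inl hi)
    by_cases hj : j ∈ Z
    · exact phi_fij_dead Z (Or.inr hj)
    · have hadj' : ((cycG n).induce Zᶜ).Adj ⟨i, hi⟩ ⟨j, hj⟩ := hadj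
      exact phi_fij_same Z hi hj (SimpleGraph.ConnectedComponent.sound hadj'.reachable)
  exact this hg

/-- P_S is killed by phi S -/
lemma phi_PS_zero [NeZero n] (S : Set (Fin n)) {g : PolyRing n}
    (hg : g ∈ primePS (cycG n) S) : phi S g = 0 := by
  have : primePS (cycG n) S ≤ RingHom.ker (phi S).toRingHom := by
    apply sup_le
    · apply Ideal.span_le.mpr
      rintro g' (⟨i, hi, rfl⟩ | ⟨i, hi, rfl⟩)
      · simpa [RingHom.mem_ker] using phi_X_inl_dead S i hi
      · simpa [RingHom.mem_ker] using phi_X_inr_dead S i hi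
    · apply Ideal.span_le.mpr
      rintro g' ⟨i, j, hadj, rfl⟩
      simp only [SetLike.mem_coe, RingHom.mem_ker]
      rw [tildeG, SimpleGraph.fromRel_adj] at hadj
      obtain ⟨hne, h | h⟩ := hadj
      · obtain ⟨hi, hj, hc⟩ := samecomp_mk h
        exact phi_fij_same S hi hj hc
      · obtain ⟨hj, hi, hc⟩ := samecomp_mk h
        exact phi_fij_same S hi hj hc.symm
  exact this hg

lemma phi_ker_prime [NeZero n] (Z : Set (Fin n)) :
    (RingHom.ker (phi Z).toRingHom).IsPrime :=
  RingHom.ker_isPrime _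

lemma phi_X_inl_ne [NeZero n] (Z : Set (Fin n)) (w : Fin n) (h : w ∈ Zᶜ) :
    phi Z (X (Sum.inl w)) ≠ 0 := by
  rw [phi_X_inl Z w h]
  exact mul_ne_zero (X_ne_zero _) (X_ne_zero _)

end VN

namespace VN
open MvPolynomial

variable {n : ℕ}

/-- vertex of a source variable -/
def vtx : (Fin n ⊕ Fin n) → Option (Fin n) := Sum.elim (fun w => some w) (fun w => some w)

/-- vertex of a target variable -/
def vtxT [NeZero n] (Z : Set (Fin n)) : (Fin n ⊕ (CompT n Z ⊕ CompT n Z)) → Option (Fin n) :=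
  Sum.elim (fun w => some w) (fun _ => none)

section grading
variable {σ : Type*}

/-- multidegree (per-vertex degree) of a monomial exponent -/
def wdeg (π : σ → Option (Fin n)) (m : σ →₀ ℕ) : Fin n → ℕ :=
  fun v => m.sum fun s e => if π s = some v then e else 0

lemma wdeg_add (π : σ → Option (Fin n)) (m m' : σ →₀ ℕ) :
    wdeg π (m + m') = wdeg π m + wdeg π m' := by
  funext v
  unfold wdeg
  rw [Finsupp.sum_add_index']
  · rfl
  · intro a; simp
  · intro a b₁ b₂; split_ifs <;> simp

lemma wdeg_single (π : σ → Option (Fin n)) (s : σ) (e : ℕ) :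
    wdeg π (Finsupp.single s e) = fun v => if π s = some v then e else 0 := by
  funext v
  unfold wdeg
  rw [Finsupp.sum_single_index]
  simp

/-- `f` is multihomogeneous of multidegree `μ` -/
def IsVH (π : σ → Option (Fin n)) (μ : Fin n → ℕ) (f : MvPolynomial σ ℂ) : Prop :=
  ∀ m ∈ f.support, wdeg π m = μ

open scoped Classical in
/-- the multidegree-`μ` component of `f` -/
noncomputable def Cmu (π : σ → Option (Fin n)) (μ : Fin n → ℕ) (f : MvPolynomial σ ℂ) :
    MvPolynomial σ ℂ :=
  ∑ m ∈ f.support.filter (fun m => wdeg π m = μ), monomial m (coeff m f)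

lemma coeff_Cmu (π : σ → Option (Fin n)) (μ : Fin n → ℕ) (f : MvPolynomial σ ℂ)
    (m' : (σ →₀ ℕ)) :
    coeff m' (Cmu π μ f) = if wdeg π m' = μ then coeff m' f else 0 := by
  classical
  unfold Cmu
  rw [coeff_sum]
  simp_rw [coeff_monomial]
  rw [Finset.sum_ite_eq' (Finset.filter (fun m => wdeg π m = μ) f.support) m' (fun m => coeff m f)]
  simp only [Finset.mem_filter, mem_support_iff]
  by_cases h1 : wdeg π m' = μ
  · by_cases h2 : coeff m' f = 0 <;> simp [h1, h2]
  · simp [h1]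

lemma Cmu_vh (π : σ → Option (Fin n)) (μ : Fin n → ℕ) (f : MvPolynomial σ ℂ) :
    IsVH π μ (Cmu π μ f) := by
  intro m hm
  rw [mem_support_iff, coeff_Cmu] at hm
  by_contra h
  simp [h] at hm

lemma Cmu_of_vh {π : σ → Option (Fin n)} {μ : Fin n → ℕ} {f : MvPolynomial σ ℂ}
    (h : IsVH π μ f) : Cmu π μ f = f := by
  ext m'
  rw [coeff_Cmu]
  split_ifs with h1
  · rfl
  · by_contra h2
    exact h1 (h m' (mem_support_iff.mpr (fun hh => h2 hh.symm)))

lemma Cmu_of_vh_ne {π : σ → Option (Fin n)} {ν μ : Fin n → ℕ} {f : MvPolynomial σ ℂ}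
    (h : IsVH π ν f) (hne : ν ≠ μ) : Cmu π μ f = 0 := by
  ext m'
  rw [coeff_Cmu]
  split_ifs with h1
  · rw [coeff_zero]
    by_contra h2
    exact hne ((h m' (mem_support_iff.mpr h2)).symm.trans h1)
  · simp

lemma Cmu_not_mem {π : σ → Option (Fin n)} {μ : Fin n → ℕ} {f : MvPolynomial σ ℂ}
    (h : μ ∉ f.support.image (wdeg π)) : Cmu π μ f = 0 := by
  classical
  ext m'
  rw [coeff_Cmu]
  split_ifs with h1
  · rw [coeff_zero]
    by_contra h2
    exact h (Finset.mem_image.mpr ⟨m', mem_support_iff.mpr h2, h1⟩)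
  · simp

lemma sum_Cmu (π : σ → Option (Fin n)) (f : MvPolynomial σ ℂ) :
    ∑ μ ∈ f.support.image (wdeg π), Cmu π μ f = f := by
  classical
  ext m'
  rw [coeff_sum]
  simp_rw [coeff_Cmu]
  by_cases hm : m' ∈ f.support
  · have himg : wdeg π m' ∈ f.support.image (wdeg π) := Finset.mem_image_of_mem _ hm
    rw [Finset.sum_eq_single (wdeg π m')]
    · simp
    · intro b _ hb
      rw [if_neg (fun h : wdeg π m' = b => hb h.symm)]
    · intro h; exact absurd himg h
  · have : coeff m' f = 0 := by rwa [mem_support_iff, not_not] at hm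
    simp [this]

lemma vh_zero (π : σ → Option (Fin n)) (μ : Fin n → ℕ) : IsVH π μ (0 : MvPolynomial σ ℂ) := by
  intro m hm; simp at hm

lemma vh_add {π : σ → Option (Fin n)} {μ : Fin n → ℕ} {f g : MvPolynomial σ ℂ}
    (hf : IsVH π μ f) (hg : IsVH π μ g) : IsVH π μ (f + g) := by
  haveI := Classical.decEq σ
  intro m hm
  rcases Finset.mem_union.mp (MvPolynomial.support_add hm) with h | h
  · exact hf m h
  · exact hg m h

lemma vh_sum {π : σ → Option (Fin n)} {μ : Fin n → ℕ} {ι : Type*} (s : Finset ι)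
    (F : ι → MvPolynomial σ ℂ) (h : ∀ i ∈ s, IsVH π μ (F i)) : IsVH π μ (∑ i ∈ s, F i) := by
  classical
  induction s using Finset.cons_induction with
  | empty => simpa using vh_zero π μ
  | cons a s ha ih =>
    rw [Finset.sum_cons]
    exact vh_add (h a (Finset.mem_cons_self a s)) (ih fun i hi => h i (Finset.mem_cons_of_mem hi))

lemma vh_mul {π : σ → Option (Fin n)} {μ ν : Fin n → ℕ} {f g : MvPolynomial σ ℂ}
    (hf : IsVH π μ f) (hg : IsVH π ν g) : IsVH π (μ + ν) (f * g) := by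
  haveI := Classical.decEq σ
  intro m hm
  obtain ⟨m₁, h₁, m₂, h₂, rfl⟩ := Finset.mem_add.mp (MvPolynomial.support_mul f g hm)
  rw [wdeg_add, hf m₁ h₁, hg m₂ h₂]

lemma vh_monomial (π : σ → Option (Fin n)) (m : σ →₀ ℕ) (c : ℂ) :
    IsVH π (wdeg π m) (monomial m c) := by
  classical
  intro m' hm'
  have h := Finset.mem_of_subset support_monomial_subset hm'
  rw [Finset.mem_singleton] at h
  rw [h]

lemma wdeg_zero (π : σ → Option (Fin n)) : wdeg π (0 : σ →₀ ℕ) = fun _ => 0 := by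
  funext v; unfold wdeg; simp

lemma vh_C (π : σ → Option (Fin n)) (c : ℂ) :
    IsVH π (fun _ => 0) (C c : MvPolynomial σ ℂ) := by
  have h := vh_monomial π (0 : σ →₀ ℕ) c
  rw [wdeg_zero] at h
  simpa [monomial_zero'] using h

lemma vh_pow {π : σ → Option (Fin n)} {μ : Fin n → ℕ} {f : MvPolynomial σ ℂ}
    (hf : IsVH π μ f) (k : ℕ) : IsVH π (fun v => k * μ v) (f ^ k) := by
  induction k with
  | zero => simpa using vh_C π 1
  | succ k ih =>
    have := vh_mul ih hf
    have heq : (fun v => k * μ v) + μ = fun v => (k+1) * μ v := by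
      funext v; simp [Nat.succ_mul]
    rw [heq] at this
    rwa [pow_succ]

lemma vh_prod {π : σ → Option (Fin n)} {ι : Type*} (s : Finset ι)
    (F : ι → MvPolynomial σ ℂ) (w : ι → Fin n → ℕ) (h : ∀ i ∈ s, IsVH π (w i) (F i)) :
    IsVH π (∑ i ∈ s, w i) (∏ i ∈ s, F i) := by
  classical
  induction s using Finset.cons_induction with
  | empty => simpa [Pi.zero_def] using vh_C π 1
  | cons a s ha ih =>
    rw [Finset.sum_cons, Finset.prod_cons]
    exact vh_mul (h a (Finset.mem_cons_self a s)) (ih fun i hi => h i (Finset.mem_cons_of_mem hi))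

end grading
end VN

namespace VN
open MvPolynomial

variable {n : ℕ}

/-- indicator multidegree -/
def dlt (w : Fin n) : Fin n → ℕ := fun u => if w = u then 1 else 0

lemma wdeg_single_vtx_inl (w : Fin n) :
    wdeg vtx (Finsupp.single (Sum.inl w : Fin n ⊕ Fin n) 1) = dlt w := by
  rw [wdeg_single]
  funext u
  simp [vtx, dlt]

lemma wdeg_single_vtx_inr (w : Fin n) :
    wdeg vtx (Finsupp.single (Sum.inr w : Fin n ⊕ Fin n) 1) = dlt w := by
  rw [wdeg_single]
  funext u
  simp [vtx, dlt]

lemma wdeg_single_vtxT_inl [NeZero n] (Z : Set (Fin n)) (w : Fin n) :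
    wdeg (vtxT Z) (Finsupp.single (Sum.inl w : Fin n ⊕ (CompT n Z ⊕ CompT n Z)) 1) = dlt w := by
  rw [wdeg_single]
  funext u
  simp [vtxT, dlt]

lemma wdeg_single_vtxT_inr [NeZero n] (Z : Set (Fin n)) (c : CompT n Z ⊕ CompT n Z) :
    wdeg (vtxT Z) (Finsupp.single (Sum.inr c : Fin n ⊕ (CompT n Z ⊕ CompT n Z)) 1) =
      fun _ => 0 := by
  rw [wdeg_single]
  funext u
  simp [vtxT]

lemma vh_X_tgt_a [NeZero n] (Z : Set (Fin n)) (w : Fin n) :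
    IsVH (vtxT Z) (dlt w) (X (Sum.inl w) : TR n Z) := by
  have h := vh_monomial (vtxT Z) (Finsupp.single (Sum.inl w) 1) (1 : ℂ)
  rw [wdeg_single_vtxT_inl] at h
  rwa [X, ] at *

lemma vh_X_tgt_c [NeZero n] (Z : Set (Fin n)) (c : CompT n Z ⊕ CompT n Z) :
    IsVH (vtxT Z) (fun _ => 0) (X (Sum.inr c) : TR n Z) := by
  have h := vh_monomial (vtxT Z) (Finsupp.single (Sum.inr c) 1) (1 : ℂ)
  rw [wdeg_single_vtxT_inr] at h
  rwa [X] at *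

lemma vh_phiVar [NeZero n] (Z : Set (Fin n)) (v : Fin n ⊕ Fin n) :
    IsVH (vtxT Z) (wdeg vtx (Finsupp.single v 1)) (phiVar Z v) := by
  classical
  cases v with
  | inl w =>
    rw [wdeg_single_vtx_inl]
    show IsVH _ _ (if h : w ∈ Zᶜ then _ else 0)
    split_ifs with h
    · have := vh_mul (vh_X_tgt_a Z w) (vh_X_tgt_c Z
        (Sum.inl (((cycG n).induce Zᶜ).connectedComponentMk ⟨w, h⟩)))
      simpa [Pi.add_def] using this
    · exact vh_zero _ _
  | inr w =>
    rw [wdeg_single_vtx_inr]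
    show IsVH _ _ (if h : w ∈ Zᶜ then _ else 0)
    split_ifs with h
    · have := vh_mul (vh_X_tgt_a Z w) (vh_X_tgt_c Z
        (Sum.inr (((cycG n).induce Zᶜ).connectedComponentMk ⟨w, h⟩)))
      simpa [Pi.add_def] using this
    · exact vh_zero _ _

lemma vh_phi_monomial [NeZero n] (Z : Set (Fin n)) (m : (Fin n ⊕ Fin n) →₀ ℕ) (c : ℂ) :
    IsVH (vtxT Z) (wdeg vtx m) (phi Z (monomial m c)) := by
  classical
  rw [phi, aeval_monomial]
  have halg : (algebraMap ℂ (TR n Z)) c = C c := rfl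
  rw [halg]
  have hprod := vh_prod (σ := Fin n ⊕ (CompT n Z ⊕ CompT n Z)) m.support
    (fun v => phiVar Z v ^ (m v))
    (fun v => fun u => m v * wdeg vtx (Finsupp.single v 1) u)
    (fun v _ => by
      have := vh_pow (vh_phiVar Z v) (m v)
      exact this)
  have hsum : (fun _ => 0) + (∑ v ∈ m.support, fun u => m v * wdeg vtx (Finsupp.single v 1) u)
      = wdeg vtx m := by
    funext u
    simp only [Pi.add_apply, Finset.sum_apply]
    have h1 : ∀ s : Fin n ⊕ Fin n, wdeg vtx (Finsupp.single s 1) u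
        = if vtx s = some u then 1 else 0 := fun s => by
      rw [wdeg_single]
    simp only [h1]
    rw [zero_add]
    show _ = Finsupp.sum m fun s e => if vtx s = some u then e else 0
    rw [Finsupp.sum]
    apply Finset.sum_congr rfl
    intro s _
    split_ifs <;> simp
  have := vh_mul (vh_C (vtxT Z) c) hprod
  rw [hsum] at this
  rw [Finsupp.prod]
  exact this

end VN

namespace VN
open MvPolynomial

variable {n : ℕ}

section more
variable {σ : Type*}

lemma Cmu_zero (π : σ → Option (Fin n)) (μ : Fin n → ℕ) : Cmu π μ (0 : MvPolynomial σ ℂ) = 0 := by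
  ext m'
  rw [coeff_Cmu]
  split_ifs <;> simp

lemma Cmu_add (π : σ → Option (Fin n)) (μ : Fin n → ℕ) (f g : MvPolynomial σ ℂ) :
    Cmu π μ (f + g) = Cmu π μ f + Cmu π μ g := by
  ext m'
  rw [coeff_add, coeff_Cmu, coeff_Cmu, coeff_Cmu, coeff_add]
  split_ifs <;> simp

lemma Cmu_finsum (π : σ → Option (Fin n)) (μ : Fin n → ℕ) {ι : Type*} (s : Finset ι)
    (F : ι → MvPolynomial σ ℂ) :
    Cmu π μ (∑ i ∈ s, F i) = ∑ i ∈ s, Cmu π μ (F i) := by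
  classical
  induction s using Finset.cons_induction with
  | empty => simpa using Cmu_zero π μ
  | cons a s ha ih => rw [Finset.sum_cons, Finset.sum_cons, Cmu_add, ih]

end more

lemma vh_phi [NeZero n] (Z : Set (Fin n)) {μ : Fin n → ℕ} {f : PolyRing n}
    (hf : IsVH vtx μ f) : IsVH (vtxT Z) μ (phi Z f) := by
  classical
  conv => enter [3, 2]; rw [← support_sum_monomial_coeff f]
  rw [map_sum]
  apply vh_sum
  intro m hm
  have h := vh_phi_monomial Z m (coeff m f)
  rwa [hf m hm] at h

lemma Cmu_phi [NeZero n] (Z : Set (Fin n)) (μ : Fin n → ℕ) (f : PolyRing n) :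
    phi Z (Cmu vtx μ f) = Cmu (vtxT Z) μ (phi Z f) := by
  classical
  symm
  have hdecomp : phi Z f = ∑ μ' ∈ f.support.image (wdeg vtx), phi Z (Cmu vtx μ' f) := by
    conv_lhs => rw [← sum_Cmu vtx f]
    rw [map_sum]
  rw [hdecomp, Cmu_finsum, Finset.sum_eq_single μ]
  · exact Cmu_of_vh (vh_phi Z (Cmu_vh vtx μ f))
  · intro b _ hb
    exact Cmu_of_vh_ne (vh_phi Z (Cmu_vh vtx b f)) hb
  · intro hmem
    rw [Cmu_not_mem hmem, map_zero, Cmu_zero]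

lemma vh_no_w {μ : Fin n → ℕ} {g : PolyRing n} (hg : IsVH vtx μ g) {w : Fin n}
    (hw : μ w = 0) :
    ∀ m ∈ g.support, m (Sum.inl w) = 0 ∧ m (Sum.inr w) = 0 := by
  intro m hm
  have h := hg m hm
  have h0 : wdeg vtx m w = 0 := by rw [h, hw]
  have key : ∀ s : Fin n ⊕ Fin n, vtx s = some w → m s = 0 := by
    intro s hs
    by_contra hne
    have hmem : s ∈ m.support := Finsupp.mem_support_iff.mpr hne
    have hle : m s ≤ wdeg vtx m w := by
      unfold wdeg
      rw [Finsupp.sum]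
      have h2 := Finset.single_le_sum
        (f := fun s' => if vtx s' = some w then m s' else 0)
        (fun i _ => Nat.zero_le _) hmem
      simp only [hs, if_pos] at h2
      exact h2
    omega
  exact ⟨key _ rfl, key _ rfl⟩

lemma sum_wdeg' (m : (Fin n ⊕ Fin n) →₀ ℕ) :
    ∑ v : Fin n, wdeg vtx m v = m.sum fun _ e => e := by
  unfold wdeg
  rw [Finsupp.sum]
  simp only [Finsupp.sum]
  rw [Finset.sum_comm]
  apply Finset.sum_congr rfl
  intro s _
  cases s with
  | inl w => simp [vtx, Finset.sum_ite_eq]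
  | inr w => simp [vtx, Finset.sum_ite_eq]

lemma vh_degree {μ : Fin n → ℕ} {f : PolyRing n} {d : ℕ} (hf : IsVH vtx μ f)
    (hd : f.IsHomogeneous d) (hne : f ≠ 0) : ∑ v : Fin n, μ v = d := by
  obtain ⟨m, hm⟩ := (MvPolynomial.support_nonempty.mpr hne)
  have h1 := hf m hm
  have h2 := hd (mem_support_iff.mp hm)
  rw [← h1, sum_wdeg', ← h2]
  rw [Finsupp.weight_apply]
  simp [Finsupp.sum]

end VN

namespace VN
open MvPolynomial SimpleGraph

variable {n : ℕ}

lemma X_inl_mem_PS [NeZero n] {S : Set (Fin n)} {i : Fin n} (hi : i ∈ S) :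
    (X (Sum.inl i) : PolyRing n) ∈ primePS (cycG n) S :=
  Ideal.mem_sup_left (Ideal.subset_span (Or.inl ⟨i, hi, rfl⟩))

lemma X_inr_mem_PS [NeZero n] {S : Set (Fin n)} {i : Fin n} (hi : i ∈ S) :
    (X (Sum.inr i) : PolyRing n) ∈ primePS (cycG n) S :=
  Ideal.mem_sup_left (Ideal.subset_span (Or.inr ⟨i, hi, rfl⟩))

lemma fij_mem_PS [NeZero n] {S : Set (Fin n)} {a b : Fin n} (hne : a ≠ b)
    (hsc : SameComp (cycG n) Sᶜ a b) : fij a b ∈ primePS (cycG n) S := by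
  apply Ideal.mem_sup_right
  apply Ideal.subset_span
  exact ⟨a, b, (SimpleGraph.fromRel_adj _ _ _).mpr ⟨hne, Or.inl hsc⟩, rfl⟩

lemma mk_samecomp [NeZero n] {T : Set (Fin n)} {a b : Fin n} (ha : a ∈ T) (hb : b ∈ T)
    (h : ((cycG n).induce T).connectedComponentMk ⟨a, ha⟩ =
      ((cycG n).induce T).connectedComponentMk ⟨b, hb⟩) : SameComp (cycG n) T a b :=
  ⟨ha, hb, SimpleGraph.ConnectedComponent.exact h⟩

/-- sorted (normal) exponents relative to `S` -/
def Sorted (S : Set (Fin n)) [NeZero n] (m : (Fin n ⊕ Fin n) →₀ ℕ) : Prop :=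
  (∀ i ∈ S, m (Sum.inl i) = 0 ∧ m (Sum.inr i) = 0) ∧
  ∀ a b : Fin n, SameComp (cycG n) Sᶜ a b → b < a →
    m (Sum.inl a) = 0 ∨ m (Sum.inr b) = 0

/-- straightening measure -/
def lamW (m : (Fin n ⊕ Fin n) →₀ ℕ) : ℕ :=
  m.sum fun s e => Sum.elim (fun a : Fin n => a.val * e) (fun _ => 0) s

lemma lamW_add (m m' : (Fin n ⊕ Fin n) →₀ ℕ) : lamW (m + m') = lamW m + lamW m' := by
  unfold lamW
  rw [Finsupp.sum_add_index']
  · intro s; cases s <;> simp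
  · intro s b₁ b₂; cases s <;> simp [Nat.mul_add]

lemma lamW_single_inl (a : Fin n) : lamW (Finsupp.single (Sum.inl a : Fin n ⊕ Fin n) 1) = a.val := by
  unfold lamW
  rw [Finsupp.sum_single_index] <;> simp

lemma lamW_single_inr (a : Fin n) : lamW (Finsupp.single (Sum.inr a : Fin n ⊕ Fin n) 1) = 0 := by
  unfold lamW
  rw [Finsupp.sum_single_index] <;> simp

lemma sub_single_add {s : (Fin n ⊕ Fin n) →₀ ℕ} {t : Fin n ⊕ Fin n} (h : 1 ≤ s t) :
    Finsupp.single t 1 + (s - Finsupp.single t 1) = s := by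
  rw [add_tsub_cancel_of_le]
  rwa [Finsupp.single_le_iff]

lemma X_as_monomial {σ : Type*} {t : σ} :
    (X t : MvPolynomial σ ℂ) = monomial (Finsupp.single t 1) 1 := rfl

/-- every monomial reduces mod `P_S` to a sorted polynomial -/
lemma reduce_monomial [NeZero n] (S : Set (Fin n)) :
    ∀ (N : ℕ) (m : (Fin n ⊕ Fin n) →₀ ℕ), lamW m ≤ N →
    ∃ p ∈ primePS (cycG n) S,
      ∀ m' ∈ (monomial m 1 - p : PolyRing n).support, Sorted S m' := by
  intro N
  induction N using Nat.strong_induction_on with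
  | _ N ih =>
  intro m hm
  by_cases hS : ∃ i ∈ S, m (Sum.inl i) ≠ 0 ∨ m (Sum.inr i) ≠ 0
  · obtain ⟨i, hi, hcase⟩ := hS
    have hmem : (monomial m 1 : PolyRing n) ∈ primePS (cycG n) S := by
      rcases hcase with h | h
      · have h1 : 1 ≤ m (Sum.inl i) := Nat.one_le_iff_ne_zero.mpr h
        have heq : (monomial m 1 : PolyRing n)
            = X (Sum.inl i) * monomial (m - Finsupp.single (Sum.inl i) 1) 1 := by
          rw [X_as_monomial, monomial_mul, one_mul, sub_single_add h1]
        rw [heq]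
        exact Ideal.mul_mem_right _ _ (X_inl_mem_PS hi)
      · have h1 : 1 ≤ m (Sum.inr i) := Nat.one_le_iff_ne_zero.mpr h
        have heq : (monomial m 1 : PolyRing n)
            = X (Sum.inr i) * monomial (m - Finsupp.single (Sum.inr i) 1) 1 := by
          rw [X_as_monomial, monomial_mul, one_mul, sub_single_add h1]
        rw [heq]
        exact Ideal.mul_mem_right _ _ (X_inr_mem_PS hi)
    exact ⟨monomial m 1, hmem, by simp⟩
  push_neg at hS
  have hfst : ∀ i ∈ S, m (Sum.inl i) = 0 ∧ m (Sum.inr i) = 0 := by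
    intro i hi
    exact hS i hi
  by_cases hsorted : Sorted S m
  · refine ⟨0, Ideal.zero_mem _, ?_⟩
    intro m' hm'
    rw [sub_zero] at hm'
    have h := support_monomial_subset hm'
    rw [Finset.mem_singleton] at h
    rwa [h]
  · have hbad : ∃ a b : Fin n, SameComp (cycG n) Sᶜ a b ∧ b < a ∧
        m (Sum.inl a) ≠ 0 ∧ m (Sum.inr b) ≠ 0 := by
      by_contra hc
      push_neg at hc
      apply hsorted
      refine ⟨hfst, ?_⟩
      intro a b hsc hba
      by_contra hor
      push_neg at hor
      exact hor.2 (hc a b hsc hba hor.1)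
    obtain ⟨a, b, hsc, hba, ha0, hb0⟩ := hbad
    have hane : (Sum.inl a : Fin n ⊕ Fin n) ≠ Sum.inr b := by simp
    have hle : Finsupp.single (Sum.inl a : Fin n ⊕ Fin n) 1
        + Finsupp.single (Sum.inr b : Fin n ⊕ Fin n) 1 ≤ m := by
      intro s
      rw [Finsupp.add_apply]
      rcases eq_or_ne s (Sum.inl a) with rfl | hsa
      · rw [Finsupp.single_eq_same, Finsupp.single_eq_of_ne (Ne.symm (by simp)), ]
        omega
      · rw [Finsupp.single_eq_of_ne' (Ne.symm hsa)]
        rcases eq_or_ne s (Sum.inr b) with rfl | hsb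
        · rw [Finsupp.single_eq_same]
          omega
        · rw [Finsupp.single_eq_of_ne' (Ne.symm hsb)]
          omega
    set rest := m - (Finsupp.single (Sum.inl a) 1 + Finsupp.single (Sum.inr b) 1) with hrest
    have hm_eq : rest + (Finsupp.single (Sum.inl a) 1 + Finsupp.single (Sum.inr b) 1) = m := by
      rw [hrest, tsub_add_cancel_of_le hle]
    -- the rewritten monomial
    set m2 := rest + (Finsupp.single (Sum.inl b) 1 + Finsupp.single (Sum.inr a) 1) with hm2
    have hsplit : (monomial m 1 : PolyRing n)
        = monomial rest 1 * fij a b + monomial m2 1 := by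
      have h1 : (monomial m 1 : PolyRing n)
          = monomial rest 1 * (X (Sum.inl a) * X (Sum.inr b)) := by
        rw [X_as_monomial, X_as_monomial, monomial_mul, monomial_mul, one_mul, one_mul, hm_eq]
      have h2 : (monomial m2 1 : PolyRing n)
          = monomial rest 1 * (X (Sum.inl b) * X (Sum.inr a)) := by
        rw [X_as_monomial, X_as_monomial, monomial_mul, monomial_mul, one_mul, one_mul, hm2]
      rw [h1, h2, fij]
      ring
    have hlam : lamW m2 < lamW m := by
      have e1 : lamW m = lamW rest + a.val := by
        rw [← hm_eq, lamW_add, lamW_add, lamW_single_inl, lamW_single_inr]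
        omega
      have e2 : lamW m2 = lamW rest + b.val := by
        rw [hm2, lamW_add, lamW_add, lamW_single_inl, lamW_single_inr]
        omega
      have : b.val < a.val := hba
      omega
    obtain ⟨p2, hp2, hp2s⟩ := ih (lamW m2) (by omega) m2 le_rfl
    refine ⟨monomial rest 1 * fij a b + p2, ?_, ?_⟩
    · exact Ideal.add_mem _ (Ideal.mul_mem_left _ _
        (fij_mem_PS (fun h => by rw [h] at hba; exact lt_irrefl _ hba) hsc)) hp2
    · intro m' hm'
      apply hp2s
      have : (monomial m 1 - (monomial rest 1 * fij a b + p2) : PolyRing n)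
          = monomial m2 1 - p2 := by
        rw [hsplit]; ring
      rwa [this] at hm'

end VN

namespace VN
open MvPolynomial SimpleGraph

variable {n : ℕ}

lemma support_finsum_subset {σ : Type*} {ι : Type*} (s : Finset ι)
    (F : ι → MvPolynomial σ ℂ) :
    ∀ m ∈ (∑ i ∈ s, F i).support, ∃ i ∈ s, m ∈ (F i).support := by
  classical
  induction s using Finset.cons_induction with
  | empty => simp
  | cons a s ha ih =>
    rw [Finset.sum_cons]
    intro m hm
    rcases Finset.mem_union.mp (MvPolynomial.support_add hm) with h | h
    · exact ⟨a, Finset.mem_cons_self a s, h⟩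
    · obtain ⟨i, hi, hmi⟩ := ih m h
      exact ⟨i, Finset.mem_cons_of_mem hi, hmi⟩

lemma reduce [NeZero n] (S : Set (Fin n)) (f : PolyRing n) :
    ∃ p ∈ primePS (cycG n) S, ∀ m ∈ (f - p).support, Sorted S m := by
  classical
  choose P hP1 hP2 using fun m : (Fin n ⊕ Fin n) →₀ ℕ =>
    reduce_monomial S (lamW m) m le_rfl
  refine ⟨∑ m ∈ f.support, C (coeff m f) * P m,
    Ideal.sum_mem _ (fun m _ => Ideal.mul_mem_left _ _ (hP1 m)), ?_⟩
  have hf : f = ∑ m ∈ f.support, C (coeff m f) * monomial m 1 := by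
    conv_lhs => rw [← support_sum_monomial_coeff f]
    apply Finset.sum_congr rfl
    intro m _
    rw [C_mul_monomial, mul_one]
  have hdiff : f - ∑ m ∈ f.support, C (coeff m f) * P m
      = ∑ m ∈ f.support, C (coeff m f) * (monomial m 1 - P m) := by
    nth_rewrite 1 [hf]
    rw [← Finset.sum_sub_distrib]
    apply Finset.sum_congr rfl
    intro m _
    rw [mul_sub]
  rw [hdiff]
  intro m' hm'
  obtain ⟨m₀, _, hmem⟩ := support_finsum_subset _ _ m' hm'
  have : m' ∈ (monomial m₀ 1 - P m₀ : PolyRing n).support := by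
    have hsm : (C (coeff m₀ f) * (monomial m₀ 1 - P m₀) : PolyRing n)
        = coeff m₀ f • (monomial m₀ 1 - P m₀) := by
      rw [smul_eq_C_mul]
    rw [hsm] at hmem
    exact Finsupp.support_smul hmem
  exact hP2 m₀ m' this

open scoped Classical in
noncomputable def Evec [NeZero n] (S : Set (Fin n)) : (Fin n ⊕ Fin n) →
    ((Fin n ⊕ (CompT n S ⊕ CompT n S)) →₀ ℕ)
  | Sum.inl w =>
      if h : w ∈ Sᶜ then Finsupp.single (Sum.inl w) 1
        + Finsupp.single (Sum.inr (Sum.inl (((cycG n).induce Sᶜ).connectedComponentMk ⟨w, h⟩))) 1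
      else 0
  | Sum.inr w =>
      if h : w ∈ Sᶜ then Finsupp.single (Sum.inl w) 1
        + Finsupp.single (Sum.inr (Sum.inr (((cycG n).induce Sᶜ).connectedComponentMk ⟨w, h⟩))) 1
      else 0

noncomputable def Emap [NeZero n] (S : Set (Fin n)) (m : (Fin n ⊕ Fin n) →₀ ℕ) :
    (Fin n ⊕ (CompT n S ⊕ CompT n S)) →₀ ℕ :=
  m.sum fun s e => e • Evec S s

lemma phiVar_eq_monomial_Evec [NeZero n] (S : Set (Fin n)) {s : Fin n ⊕ Fin n}
    (halive : ∀ w, (s = Sum.inl w ∨ s = Sum.inr w) → w ∈ Sᶜ) :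
    phiVar S s = monomial (Evec S s) 1 := by
  classical
  cases s with
  | inl w =>
    have hw : w ∈ Sᶜ := halive w (Or.inl rfl)
    simp only [phiVar, Evec, dif_pos hw]
    rw [X_as_monomial, X_as_monomial, monomial_mul, one_mul]
  | inr w =>
    have hw : w ∈ Sᶜ := halive w (Or.inr rfl)
    simp only [phiVar, Evec, dif_pos hw]
    rw [X_as_monomial, X_as_monomial, monomial_mul, one_mul]

lemma prod_monomial {σ : Type*} {ι : Type*} (s : Finset ι) (g : ι → (σ →₀ ℕ)) :
    (∏ i ∈ s, (monomial (g i) 1 : MvPolynomial σ ℂ)) = monomial (∑ i ∈ s, g i) 1 := by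
  classical
  induction s using Finset.cons_induction with
  | empty => simp
  | cons a s ha ih =>
    rw [Finset.prod_cons, Finset.sum_cons, ih, monomial_mul, one_mul]

lemma phi_monomial_offS [NeZero n] (S : Set (Fin n)) {m : (Fin n ⊕ Fin n) →₀ ℕ}
    (hm : ∀ i ∈ S, m (Sum.inl i) = 0 ∧ m (Sum.inr i) = 0) :
    phi S (monomial m 1) = monomial (Emap S m) 1 := by
  classical
  rw [phi, aeval_monomial, map_one, one_mul, Finsupp.prod, Emap, Finsupp.sum]
  have hc : ∀ s ∈ m.support, phiVar S s ^ m s = monomial ((m s) • Evec S s) 1 := by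
    intro s hs
    have hne := Finsupp.mem_support_iff.mp hs
    have halive : ∀ w, (s = Sum.inl w ∨ s = Sum.inr w) → w ∈ Sᶜ := by
      intro w hw
      by_contra hmem
      have hwS : w ∈ S := not_not.mp (fun hh => hmem hh)
      rcases hw with rfl | rfl
      · exact hne (hm w hwS).1
      · exact hne (hm w hwS).2
    rw [phiVar_eq_monomial_Evec S halive, monomial_pow, one_pow]
  rw [Finset.prod_congr rfl hc, prod_monomial]

end VN

namespace VN
open MvPolynomial SimpleGraph

variable {n : ℕ}

lemma Emap_apply_inl [NeZero n] (S : Set (Fin n)) (m : (Fin n ⊕ Fin n) →₀ ℕ)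
    (hm : ∀ i ∈ S, m (Sum.inl i) = 0 ∧ m (Sum.inr i) = 0) (w : Fin n) :
    Emap S m (Sum.inl w) = m (Sum.inl w) + m (Sum.inr w) := by
  classical
  rw [Emap, Finsupp.sum_apply, Finsupp.sum]
  have hterm : ∀ s ∈ m.support, (m s • Evec S s) (Sum.inl w)
      = (if s = (Sum.inl w : Fin n ⊕ Fin n) then m s else 0)
        + (if s = (Sum.inr w : Fin n ⊕ Fin n) then m s else 0) := by
    intro s hs
    have hne := Finsupp.mem_support_iff.mp hs
    rw [Finsupp.smul_apply]
    cases s with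
    | inl w' =>
      have hw' : w' ∈ Sᶜ := by
        by_contra hmem
        exact hne (hm w' (not_not.mp (fun hh => hmem hh))).1
      simp only [Evec, dif_pos hw']
      rw [Finsupp.add_apply, Finsupp.single_apply, Finsupp.single_apply]
      by_cases h : w' = w
      · subst h; simp
      · simp [h]
    | inr w' =>
      have hw' : w' ∈ Sᶜ := by
        by_contra hmem
        exact hne (hm w' (not_not.mp (fun hh => hmem hh))).2
      simp only [Evec, dif_pos hw']
      rw [Finsupp.add_apply, Finsupp.single_apply, Finsupp.single_apply]
      by_cases h : w' = w
      · subst h; simp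
      · simp [h]
  rw [Finset.sum_congr rfl hterm, Finset.sum_add_distrib,
    Finset.sum_ite_eq' m.support (Sum.inl w : Fin n ⊕ Fin n) (fun s => m s),
    Finset.sum_ite_eq' m.support (Sum.inr w : Fin n ⊕ Fin n) (fun s => m s)]
  by_cases h1 : (Sum.inl w : Fin n ⊕ Fin n) ∈ m.support <;>
    by_cases h2 : (Sum.inr w : Fin n ⊕ Fin n) ∈ m.support <;>
    simp [h1, h2, Finsupp.notMem_support_iff.mp, *] <;>
    first
      | (rw [Finsupp.notMem_support_iff.mp h2])
      | (rw [Finsupp.notMem_support_iff.mp h1])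
      | (rw [Finsupp.notMem_support_iff.mp h1, Finsupp.notMem_support_iff.mp h2])

open scoped Classical in
/-- the `u_c`-coordinate of `Emap` -/
lemma Emap_apply_u [NeZero n] (S : Set (Fin n)) (m : (Fin n ⊕ Fin n) →₀ ℕ)
    (hm : ∀ i ∈ S, m (Sum.inl i) = 0 ∧ m (Sum.inr i) = 0) (c : CompT n S) :
    Emap S m (Sum.inr (Sum.inl c)) =
      ∑ w : Fin n, (if h : w ∈ Sᶜ then
        (if ((cycG n).induce Sᶜ).connectedComponentMk ⟨w, h⟩ = c then m (Sum.inl w) else 0)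
        else 0) := by
  classical
  rw [Emap, Finsupp.sum_apply, Finsupp.sum]
  rw [Finset.sum_subset (Finset.subset_univ m.support) (fun s _ hs => by
    rw [Finsupp.notMem_support_iff.mp hs]
    simp)]
  rw [Fintype.sum_sum_type]
  have h2 : ∀ w' : Fin n, ((m (Sum.inr w')) • Evec S (Sum.inr w')) (Sum.inr (Sum.inl c)) = 0 := by
    intro w'
    rw [Finsupp.smul_apply]
    by_cases h : w' ∈ Sᶜ
    · simp only [Evec, dif_pos h]
      rw [Finsupp.add_apply, Finsupp.single_apply, Finsupp.single_apply]
      simp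
    · simp only [Evec, dif_neg h]
      simp
  simp only [h2, Finset.sum_const_zero, add_zero]
  apply Finset.sum_congr rfl
  intro w _
  by_cases h : w ∈ Sᶜ
  · rw [dif_pos h]
    rw [Finsupp.smul_apply]
    simp only [Evec, dif_pos h]
    rw [Finsupp.add_apply, Finsupp.single_apply, Finsupp.single_apply]
    by_cases hc : ((cycG n).induce Sᶜ).connectedComponentMk ⟨w, h⟩ = c
    · simp [hc]
    · simp [hc]
  · rw [dif_neg h]
    have hw : w ∈ S := not_not.mp (fun hh => h hh)
    rw [Finsupp.smul_apply, (hm w hw).1]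
    simp

end VN

namespace VN
open MvPolynomial SimpleGraph

variable {n : ℕ}

open scoped Classical in
lemma sum_split_at (w₀ : Fin n) (F : Fin n → ℕ) :
    ∑ w : Fin n, F w = (∑ w ∈ Finset.univ.filter (· < w₀), F w) + F w₀
      + ∑ w ∈ Finset.univ.filter (w₀ < ·), F w := by
  classical
  have hset : Finset.univ.filter (fun w => ¬ w < w₀)
      = insert w₀ (Finset.univ.filter (w₀ < ·)) := by
    ext w
    simp only [Finset.mem_filter, Finset.mem_univ, true_and, Finset.mem_insert, not_lt]
    constructor
    · intro h
      rcases eq_or_lt_of_le h with h' | h'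
      · exact Or.inl h'.symm
      · exact Or.inr h'
    · intro h
      rcases h with rfl | h
      · exact le_refl _
      · exact le_of_lt h
  rw [← Finset.sum_filter_add_sum_filter_not Finset.univ (· < w₀) F, hset,
    Finset.sum_insert (by simp)]
  omega

open scoped Classical in
lemma emap_inj_aux [NeZero n] {S : Set (Fin n)} {m₁ m₂ : (Fin n ⊕ Fin n) →₀ ℕ}
    (h₁ : Sorted S m₁) (h₂ : Sorted S m₂) (hE : Emap S m₁ = Emap S m₂)
    {w₀ : Fin n} (hmin : ∀ w, w < w₀ → m₁ (Sum.inl w) = m₂ (Sum.inl w))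
    (hlt : m₁ (Sum.inl w₀) < m₂ (Sum.inl w₀)) : False := by
  have hw₀ : w₀ ∈ Sᶜ := by
    by_contra h
    have hS : w₀ ∈ S := not_not.mp (fun hh => h hh)
    rw [(h₁.1 w₀ hS).1, (h₂.1 w₀ hS).1] at hlt
    omega
  set c : CompT n S := ((cycG n).induce Sᶜ).connectedComponentMk ⟨w₀, hw₀⟩ with hc
  have hu : Emap S m₁ (Sum.inr (Sum.inl c)) = Emap S m₂ (Sum.inr (Sum.inl c)) := by
    rw [hE]
  rw [Emap_apply_u S m₁ h₁.1 c, Emap_apply_u S m₂ h₂.1 c] at hu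
  set F₁ : Fin n → ℕ := fun w => if h : w ∈ Sᶜ then
    (if ((cycG n).induce Sᶜ).connectedComponentMk ⟨w, h⟩ = c then m₁ (Sum.inl w) else 0) else 0
    with hF₁
  set F₂ : Fin n → ℕ := fun w => if h : w ∈ Sᶜ then
    (if ((cycG n).induce Sᶜ).connectedComponentMk ⟨w, h⟩ = c then m₂ (Sum.inl w) else 0) else 0
    with hF₂
  have hsum : ∑ w : Fin n, F₁ w = ∑ w : Fin n, F₂ w := hu
  rw [sum_split_at w₀ F₁, sum_split_at w₀ F₂] at hsum
  have hlow : ∑ w ∈ Finset.univ.filter (· < w₀), F₁ w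
      = ∑ w ∈ Finset.univ.filter (· < w₀), F₂ w := by
    apply Finset.sum_congr rfl
    intro w hw
    have hlt' : w < w₀ := (Finset.mem_filter.mp hw).2
    rw [hF₁, hF₂]
    simp only
    rw [hmin w hlt']
  have hat : F₁ w₀ < F₂ w₀ := by
    rw [hF₁, hF₂]
    simp only [dif_pos hw₀, if_pos rfl]
    rw [if_pos hc.symm, if_pos hc.symm]
    exact hlt
  have hhigh : ∑ w ∈ Finset.univ.filter (w₀ < ·), F₂ w
      < ∑ w ∈ Finset.univ.filter (w₀ < ·), F₁ w := by omega
  have hex : ∃ w₁ ∈ Finset.univ.filter (w₀ < ·), F₂ w₁ < F₁ w₁ := by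
    by_contra hcon
    push_neg at hcon
    have := Finset.sum_le_sum hcon
    omega
  obtain ⟨w₁, hw₁mem, hw₁⟩ := hex
  have hgt : w₀ < w₁ := (Finset.mem_filter.mp hw₁mem).2
  have hw₁ne : F₁ w₁ ≠ 0 := by omega
  have hw₁S : w₁ ∈ Sᶜ := by
    by_contra h
    rw [hF₁] at hw₁ne
    simp only [dif_neg h] at hw₁ne
    exact hw₁ne rfl
  have hcomp : ((cycG n).induce Sᶜ).connectedComponentMk ⟨w₁, hw₁S⟩ = c := by
    by_contra h
    rw [hF₁] at hw₁ne
    simp only [dif_pos hw₁S, if_neg h] at hw₁ne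
    exact hw₁ne rfl
  have hm₁w₁ : m₁ (Sum.inl w₁) ≠ 0 := by
    rw [hF₁] at hw₁ne
    simpa only [dif_pos hw₁S, if_pos hcomp] using hw₁ne
  -- sortedness of m₁ on the pair (w₁, w₀)
  have hsc : SameComp (cycG n) Sᶜ w₁ w₀ := mk_samecomp hw₁S hw₀ (by rw [hcomp])
  rcases h₁.2 w₁ w₀ hsc hgt with h | h
  · exact hm₁w₁ h
  · -- m₁ (inr w₀) = 0 : contradiction with the a-coordinate at w₀
    have hγ : Emap S m₁ (Sum.inl w₀) = Emap S m₂ (Sum.inl w₀) := by rw [hE]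
    rw [Emap_apply_inl S m₁ h₁.1 w₀, Emap_apply_inl S m₂ h₂.1 w₀, h] at hγ
    omega

lemma emap_inj [NeZero n] {S : Set (Fin n)} {m₁ m₂ : (Fin n ⊕ Fin n) →₀ ℕ}
    (h₁ : Sorted S m₁) (h₂ : Sorted S m₂) (hE : Emap S m₁ = Emap S m₂) : m₁ = m₂ := by
  classical
  have hinl : ∀ w, m₁ (Sum.inl w) = m₂ (Sum.inl w) := by
    by_contra hcon
    push_neg at hcon
    set T := Finset.univ.filter (fun w => m₁ (Sum.inl w) ≠ m₂ (Sum.inl w)) with hT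
    have hTne : T.Nonempty := by
      obtain ⟨w, hw⟩ := hcon
      exact ⟨w, by simp [hT, hw]⟩
    set w₀ := T.min' hTne with hw₀
    have hw₀mem : w₀ ∈ T := T.min'_mem hTne
    have hne : m₁ (Sum.inl w₀) ≠ m₂ (Sum.inl w₀) := by
      have := Finset.mem_filter.mp hw₀mem
      exact this.2
    have hmin : ∀ w, w < w₀ → m₁ (Sum.inl w) = m₂ (Sum.inl w) := by
      intro w hw
      by_contra hne'
      have hwT : w ∈ T := by simp [hT, hne']
      exact absurd (T.min'_le w hwT) (not_le.mpr hw)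
    rcases Nat.lt_or_ge (m₁ (Sum.inl w₀)) (m₂ (Sum.inl w₀)) with h | h
    · exact emap_inj_aux h₁ h₂ hE hmin h
    · have hlt : m₂ (Sum.inl w₀) < m₁ (Sum.inl w₀) := by omega
      exact emap_inj_aux h₂ h₁ hE.symm (fun w hw => (hmin w hw).symm) hlt
  ext s
  cases s with
  | inl w => exact hinl w
  | inr w =>
    have hγ : Emap S m₁ (Sum.inl w) = Emap S m₂ (Sum.inl w) := by rw [hE]
    rw [Emap_apply_inl S m₁ h₁.1 w, Emap_apply_inl S m₂ h₂.1 w] at hγ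
    have := hinl w
    omega

lemma sorted_span_inj [NeZero n] (S : Set (Fin n)) (h : PolyRing n)
    (hs : ∀ m ∈ h.support, Sorted S m) (h0 : phi S h = 0) : h = 0 := by
  classical
  by_contra hne
  obtain ⟨m₀, hm₀⟩ := MvPolynomial.support_nonempty.mpr hne
  have hphi : phi S h = ∑ m ∈ h.support, monomial (Emap S m) (coeff m h) := by
    conv_lhs => rw [← support_sum_monomial_coeff h]
    rw [map_sum]
    apply Finset.sum_congr rfl
    intro m hm
    have h1 : (monomial m (coeff m h) : PolyRing n) = C (coeff m h) * monomial m 1 := by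
      rw [C_mul_monomial, mul_one]
    rw [h1, map_mul, phi_monomial_offS S (hs m hm).1]
    have h2 : phi S (C (coeff m h)) = C (coeff m h) := by
      rw [phi]
      exact aeval_C _ _
    rw [h2, C_mul_monomial, mul_one]
  rw [hphi] at h0
  have hco := congrArg (coeff (Emap S m₀)) h0
  rw [coeff_sum] at hco
  rw [Finset.sum_eq_single m₀ (fun m hm hmne => by
      rw [coeff_monomial, if_neg]
      intro hEq
      exact hmne (emap_inj (hs m hm) (hs m₀ hm₀) hEq))
    (fun hmem => absurd hm₀ hmem)] at hco
  rw [coeff_monomial, if_pos rfl, coeff_zero] at hco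
  exact (Finsupp.mem_support_iff.mp hm₀) hco

/-- THE STRAIGHTENING LAW : ker φ_S ⊆ P_S -/
lemma ker_phi_sub_PS [NeZero n] (S : Set (Fin n)) {g : PolyRing n}
    (hg : phi S g = 0) : g ∈ primePS (cycG n) S := by
  obtain ⟨p, hp, hps⟩ := reduce S g
  have h0 : phi S (g - p) = 0 := by
    rw [map_sub, hg, phi_PS_zero S hp, sub_zero]
  have hz := sorted_span_inj S (g - p) hps h0
  have : g = p := by
    have := sub_eq_zero.mp hz
    exact this
  rwa [this]

end VN

namespace VN
open MvPolynomial SimpleGraph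

variable {n : ℕ}

lemma key_x (i j k : Fin n) : (X (Sum.inl j) * fij i k : PolyRing n)
    = X (Sum.inl i) * fij j k + X (Sum.inl k) * fij i j := by
  simp only [fij]; ring

lemma key_y (i j k : Fin n) : (X (Sum.inr j) * fij i k : PolyRing n)
    = X (Sum.inr i) * fij j k + X (Sum.inr k) * fij i j := by
  simp only [fij]; ring

lemma fij_swap (a b : Fin n) : (fij a b : PolyRing n) = - fij b a := by
  simp only [fij]; ring

lemma fij_self (a : Fin n) : (fij a a : PolyRing n) = 0 := by
  simp only [fij]; ring

lemma fij_edge_mem [NeZero n] {i j : Fin n} (hadj : (cycG n).Adj i j) :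
    fij i j ∈ beIdeal (cycG n) :=
  Ideal.subset_span ⟨i, j, hadj, rfl⟩

lemma adj_succ [NeZero n] (hn : 3 ≤ n) (i : Fin n) : (cycG n).Adj i (i + 1) := by
  rw [cyc_adj]
  refine ⟨?_, Or.inl rfl⟩
  intro h
  have h0 : (0 : Fin n) = 1 := by
    have h' : i + 0 = i + 1 := by rw [add_zero]; exact h
    exact add_left_cancel h'
  have hv : ((1 : Fin n) : ℕ) = 1 := by
    rw [Fin.val_one']
    exact Nat.mod_eq_of_lt (by omega)
  rw [← h0] at hv
  simp at hv

lemma adj_pred [NeZero n] (hn : 3 ≤ n) (i : Fin n) : (cycG n).Adj (i - 1) i := by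
  have := adj_succ hn (i - 1)
  rwa [sub_add_cancel'] at this

open scoped Classical in
/-- the product of all x-variables over `Sᶜ` -/
noncomputable def Pbig [NeZero n] (S : Set (Fin n)) : PolyRing n :=
  ∏ w ∈ Finset.univ.filter (fun w : Fin n => w ∈ Sᶜ), X (Sum.inl w)

open scoped Classical in
/-- the witness polynomial -/
noncomputable def f0 [NeZero n] (S : Set (Fin n)) : PolyRing n :=
  (Pbig S) ^ n * ∏ i ∈ Finset.univ.filter (fun i : Fin n => i ∈ S), fij (i - 1) (i + 1)

open scoped Classical in
lemma walk_fij_mem [NeZero n] {S : Set (Fin n)} {A B : ↥(Sᶜ)}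
    (W : ((cycG n).induce Sᶜ).Walk A B) :
    fij (A : Fin n) (B : Fin n) * (Pbig S) ^ W.length ∈ beIdeal (cycG n) := by
  induction W with
  | nil =>
    rw [fij_self, zero_mul]
    exact Ideal.zero_mem _
  | @cons A A' B h W ih =>
    have hA' : (A' : Fin n) ∈ Finset.univ.filter (fun w : Fin n => w ∈ Sᶜ) := by
      simp only [Finset.mem_filter, Finset.mem_univ, true_and]
      exact A'.2
    have hP : Pbig S = X (Sum.inl (A' : Fin n))
        * ∏ w ∈ (Finset.univ.filter (fun w : Fin n => w ∈ Sᶜ)).erase (A' : Fin n),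
          X (Sum.inl w) := (Finset.mul_prod_erase _ _ hA').symm
    have hadj : (cycG n).Adj (A : Fin n) (A' : Fin n) := h
    have hkey := key_x (A : Fin n) (A' : Fin n) (B : Fin n)
    set Q : PolyRing n := ∏ w ∈ (Finset.univ.filter (fun w : Fin n => w ∈ Sᶜ)).erase (A' : Fin n),
      X (Sum.inl w) with hQ
    have hexp : fij (A : Fin n) (B : Fin n) * (Pbig S) ^ (SimpleGraph.Walk.cons h W).length
        = X (Sum.inl (A : Fin n)) * Q * (fij (A' : Fin n) (B : Fin n) * (Pbig S) ^ W.length)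
          + X (Sum.inl (B : Fin n)) * Q * (Pbig S) ^ W.length * fij (A : Fin n) (A' : Fin n) := by
      rw [SimpleGraph.Walk.length_cons, pow_succ]
      calc fij (A : Fin n) (B : Fin n) * ((Pbig S) ^ W.length * Pbig S)
          = (X (Sum.inl (A' : Fin n)) * fij (A : Fin n) (B : Fin n)) * Q * (Pbig S) ^ W.length := by
            rw [hP]; ring
        _ = (X (Sum.inl (A : Fin n)) * fij (A' : Fin n) (B : Fin n)
              + X (Sum.inl (B : Fin n)) * fij (A : Fin n) (A' : Fin n)) * Q * (Pbig S) ^ W.length := by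
            rw [hkey]
        _ = _ := by ring
    rw [hexp]
    exact Ideal.add_mem _ (Ideal.mul_mem_left _ _ ih)
      (Ideal.mul_mem_left _ _ (fij_edge_mem hadj))

end VN

namespace VN
open MvPolynomial SimpleGraph

variable {n : ℕ}

open scoped Classical in
lemma f0_mul_xvar_mem [NeZero n] (hn : 3 ≤ n) {S : Set (Fin n)} {i : Fin n} (hi : i ∈ S) :
    f0 S * X (Sum.inl i) ∈ beIdeal (cycG n) := by
  have hiF : i ∈ Finset.univ.filter (fun i : Fin n => i ∈ S) := by
    simp only [Finset.mem_filter, Finset.mem_univ, true_and]; exact hi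
  have hsplit : ∏ i' ∈ Finset.univ.filter (fun i' : Fin n => i' ∈ S), fij (i' - 1) (i' + 1)
      = fij (i - 1) (i + 1) * ∏ i' ∈ (Finset.univ.filter (fun i' : Fin n => i' ∈ S)).erase i,
          fij (i' - 1) (i' + 1) := (Finset.mul_prod_erase _ _ hiF).symm
  have hkey : (X (Sum.inl i) * fij (i - 1) (i + 1) : PolyRing n)
      = X (Sum.inl (i - 1)) * fij i (i + 1) + X (Sum.inl (i + 1)) * fij (i - 1) i := by
    exact key_x (i - 1) i (i + 1)
  have hmem : (X (Sum.inl i) * fij (i - 1) (i + 1) : PolyRing n) ∈ beIdeal (cycG n) := by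
    rw [hkey]
    exact Ideal.add_mem _ (Ideal.mul_mem_left _ _ (fij_edge_mem (adj_succ hn i)))
      (Ideal.mul_mem_left _ _ (fij_edge_mem (adj_pred hn i)))
  have : f0 S * X (Sum.inl i) = (Pbig S ^ n
      * ∏ i' ∈ (Finset.univ.filter (fun i' : Fin n => i' ∈ S)).erase i, fij (i' - 1) (i' + 1))
      * (X (Sum.inl i) * fij (i - 1) (i + 1)) := by
    rw [f0, hsplit]; ring
  rw [this]
  exact Ideal.mul_mem_left _ _ hmem

open scoped Classical in
lemma f0_mul_yvar_mem [NeZero n] (hn : 3 ≤ n) {S : Set (Fin n)} {i : Fin n} (hi : i ∈ S) :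
    f0 S * X (Sum.inr i) ∈ beIdeal (cycG n) := by
  have hiF : i ∈ Finset.univ.filter (fun i : Fin n => i ∈ S) := by
    simp only [Finset.mem_filter, Finset.mem_univ, true_and]; exact hi
  have hsplit : ∏ i' ∈ Finset.univ.filter (fun i' : Fin n => i' ∈ S), fij (i' - 1) (i' + 1)
      = fij (i - 1) (i + 1) * ∏ i' ∈ (Finset.univ.filter (fun i' : Fin n => i' ∈ S)).erase i,
          fij (i' - 1) (i' + 1) := (Finset.mul_prod_erase _ _ hiF).symm
  have hkey : (X (Sum.inr i) * fij (i - 1) (i + 1) : PolyRing n)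
      = X (Sum.inr (i - 1)) * fij i (i + 1) + X (Sum.inr (i + 1)) * fij (i - 1) i := by
    exact key_y (i - 1) i (i + 1)
  have hmem : (X (Sum.inr i) * fij (i - 1) (i + 1) : PolyRing n) ∈ beIdeal (cycG n) := by
    rw [hkey]
    exact Ideal.add_mem _ (Ideal.mul_mem_left _ _ (fij_edge_mem (adj_succ hn i)))
      (Ideal.mul_mem_left _ _ (fij_edge_mem (adj_pred hn i)))
  have : f0 S * X (Sum.inr i) = (Pbig S ^ n
      * ∏ i' ∈ (Finset.univ.filter (fun i' : Fin n => i' ∈ S)).erase i, fij (i' - 1) (i' + 1))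
      * (X (Sum.inr i) * fij (i - 1) (i + 1)) := by
    rw [f0, hsplit]; ring
  rw [this]
  exact Ideal.mul_mem_left _ _ hmem

lemma f0_mul_fij_mem [NeZero n] {S : Set (Fin n)} {a b : Fin n}
    (hsc : SameComp (cycG n) Sᶜ a b) : f0 S * fij a b ∈ beIdeal (cycG n) := by
  classical
  obtain ⟨ha, hb, hr⟩ := hsc
  obtain ⟨W⟩ := hr
  set p := W.toPath with hp
  have hlen : (p : ((cycG n).induce Sᶜ).Walk ⟨a, ha⟩ ⟨b, hb⟩).length < Fintype.card ↥(Sᶜ) :=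
    SimpleGraph.Walk.IsPath.length_lt p.2
  have hcard : Fintype.card ↥(Sᶜ) ≤ n := by
    have h1 := Fintype.card_subtype_le (fun v : Fin n => v ∈ Sᶜ)
    rw [Fintype.card_fin] at h1
    exact h1
  have hle : (p : ((cycG n).induce Sᶜ).Walk ⟨a, ha⟩ ⟨b, hb⟩).length ≤ n := by omega
  have hmem := walk_fij_mem (S := S) (p : ((cycG n).induce Sᶜ).Walk ⟨a, ha⟩ ⟨b, hb⟩)
  have : f0 S * fij a b = (fij a b
      * (Pbig S) ^ (p : ((cycG n).induce Sᶜ).Walk ⟨a, ha⟩ ⟨b, hb⟩).length)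
      * ((Pbig S) ^ (n - (p : ((cycG n).induce Sᶜ).Walk ⟨a, ha⟩ ⟨b, hb⟩).length)
        * ∏ i' ∈ Finset.univ.filter (fun i' : Fin n => i' ∈ S), fij (i' - 1) (i' + 1)) := by
    rw [f0]
    rw [show (Pbig S : PolyRing n) ^ n
        = (Pbig S) ^ ((p : ((cycG n).induce Sᶜ).Walk ⟨a, ha⟩ ⟨b, hb⟩).length)
          * (Pbig S) ^ (n - (p : ((cycG n).induce Sᶜ).Walk ⟨a, ha⟩ ⟨b, hb⟩).length) by
      rw [← pow_add, Nat.add_sub_cancel' hle]]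
    ring
  rw [this]
  exact Ideal.mul_mem_right _ _ hmem

/-- `f0 S` multiplies `P_S` into `J`. -/
lemma f0_mul_PS_mem [NeZero n] (hn : 3 ≤ n) {S : Set (Fin n)} :
    ∀ r ∈ primePS (cycG n) S, f0 S * r ∈ beIdeal (cycG n) := by
  intro r hr
  rw [primePS] at hr
  obtain ⟨r₁, hr₁, r₂, hr₂, rfl⟩ := Submodule.mem_sup.mp hr
  rw [mul_add]
  apply Ideal.add_mem
  · refine Submodule.span_induction ?_ ?_ ?_ ?_ hr₁
    · rintro g (⟨i, hi, rfl⟩ | ⟨i, hi, rfl⟩)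
      · exact f0_mul_xvar_mem hn hi
      · exact f0_mul_yvar_mem hn hi
    · simp
    · intro x y _ _ hx hy
      rw [mul_add]
      exact Ideal.add_mem _ hx hy
    · intro c x _ hx
      rw [smul_eq_mul]
      have : f0 S * (c * x) = c * (f0 S * x) := by ring
      rw [this]
      exact Ideal.mul_mem_left _ _ hx
  · refine Submodule.span_induction ?_ ?_ ?_ ?_ hr₂
    · rintro g ⟨i, j, hadj, rfl⟩
      rw [tildeG, SimpleGraph.fromRel_adj] at hadj
      obtain ⟨hne, h | h⟩ := hadj
      · exact f0_mul_fij_mem h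
      · rw [fij_swap]
        have : f0 S * (- fij j i) = - (f0 S * fij j i) := by ring
        rw [this]
        exact neg_mem (f0_mul_fij_mem h)
    · simp
    · intro x y _ _ hx hy
      rw [mul_add]
      exact Ideal.add_mem _ hx hy
    · intro c x _ hx
      rw [smul_eq_mul]
      have : f0 S * (c * x) = c * (f0 S * x) := by ring
      rw [this]
      exact Ideal.mul_mem_left _ _ hx

end VN

namespace VN
open MvPolynomial SimpleGraph

variable {n : ℕ}

lemma phi_fij_ne [NeZero n] (Z : Set (Fin n)) {a b : Fin n} (ha : a ∈ Zᶜ) (hb : b ∈ Zᶜ)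
    (hc : ((cycG n).induce Zᶜ).connectedComponentMk ⟨a, ha⟩ ≠
      ((cycG n).induce Zᶜ).connectedComponentMk ⟨b, hb⟩) :
    phi Z (fij a b) ≠ 0 := by
  classical
  set ca := ((cycG n).induce Zᶜ).connectedComponentMk ⟨a, ha⟩ with hca
  set cb := ((cycG n).induce Zᶜ).connectedComponentMk ⟨b, hb⟩ with hcb
  rw [fij, map_sub, map_mul, map_mul, phi_X_inl Z a ha, phi_X_inr Z b hb,
    phi_X_inl Z b hb, phi_X_inr Z a ha]
  rw [X_as_monomial, X_as_monomial, X_as_monomial, X_as_monomial, X_as_monomial, X_as_monomial]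
  rw [monomial_mul, monomial_mul, monomial_mul, monomial_mul, monomial_mul, monomial_mul]
  set E1 : (Fin n ⊕ (CompT n Z ⊕ CompT n Z)) →₀ ℕ :=
    Finsupp.single (Sum.inl a) 1 + Finsupp.single (Sum.inr (Sum.inl ca)) 1
      + (Finsupp.single (Sum.inl b) 1 + Finsupp.single (Sum.inr (Sum.inr cb)) 1) with hE1
  set E2 : (Fin n ⊕ (CompT n Z ⊕ CompT n Z)) →₀ ℕ :=
    Finsupp.single (Sum.inl b) 1 + Finsupp.single (Sum.inr (Sum.inl cb)) 1
      + (Finsupp.single (Sum.inl a) 1 + Finsupp.single (Sum.inr (Sum.inr ca)) 1) with hE2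
  intro h
  rw [sub_eq_zero] at h
  have hco := congrArg (coeff E1) h
  rw [coeff_monomial, coeff_monomial, if_pos rfl] at hco
  have hEne : ¬ (E2 = E1) := by
    intro hEq
    have := DFunLike.congr_fun hEq (Sum.inr (Sum.inl ca))
    rw [hE1, hE2] at this
    simp only [Finsupp.add_apply, Finsupp.single_apply] at this
    simp only [Sum.inr.injEq, Sum.inl.injEq, reduceCtorEq] at this
    rw [if_neg (fun hh : cb = ca => hc hh.symm)] at this
    simp at this
  rw [if_neg hEne] at hco
  simp at hco

lemma induced_walk_to_cyc [NeZero n] {T : Set (Fin n)} {a b : ↥T}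
    (p : ((cycG n).induce T).Walk a b) :
    ∃ q : (cycG n).Walk (a : Fin n) (b : Fin n), ∀ v ∈ q.support, v ∈ T := by
  induction p with
  | nil =>
    refine ⟨SimpleGraph.Walk.nil, ?_⟩
    intro v hv
    simp only [SimpleGraph.Walk.support_nil, List.mem_singleton] at hv
    rw [hv]
    exact Subtype.coe_prop _
  | @cons A A' B h p ih =>
    obtain ⟨q, hq⟩ := ih
    refine ⟨SimpleGraph.Walk.cons (h : (cycG n).Adj (A : Fin n) (A' : Fin n)) q, ?_⟩
    intro v hv
    change v ∈ (A : Fin n) :: q.support at hv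
    simp only [List.mem_cons] at hv
    rcases hv with rfl | hv
    · exact Subtype.coe_prop _
    · exact hq v hv

lemma rho_succ_self [NeZero n] (hn : 3 ≤ n) (i : Fin n) : rho i (i + 1) = 0 := by
  have hkey := (succ_iff_val (a := i) (b := i + 1) (by omega : 2 ≤ n)).mp rfl
  have h1 := i.isLt
  have h2 := (i + 1).isLt
  unfold rho
  rcases hkey with h | ⟨ha, hb⟩ <;> split <;> omega

lemma rho_pred_self [NeZero n] (hn : 3 ≤ n) (i : Fin n) : rho i (i - 1) = n - 2 := by
  have hkey := (succ_iff_val (a := i - 1) (b := i) (by omega : 2 ≤ n)).mp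
    (sub_add_cancel' i).symm
  have h1 := i.isLt
  have h2 := (i - 1).isLt
  unfold rho
  rcases hkey with h | ⟨ha, hb⟩ <;> split <;> omega

lemma pred_succ_comps_ne [NeZero n] (hn : 3 ≤ n) {S : Set (Fin n)} {i : Fin n} (hi : i ∈ S)
    (hS2 : ∃ s₀ ∈ S, s₀ ≠ i) (h1 : i - 1 ∈ Sᶜ) (h2 : i + 1 ∈ Sᶜ) :
    ((cycG n).induce Sᶜ).connectedComponentMk ⟨i + 1, h2⟩ ≠
      ((cycG n).induce Sᶜ).connectedComponentMk ⟨i - 1, h1⟩ := by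
  intro h
  obtain ⟨W⟩ := SimpleGraph.ConnectedComponent.exact h
  obtain ⟨q, hq⟩ := induced_walk_to_cyc W
  obtain ⟨s₀, hs₀S, hs₀i⟩ := hS2
  have hiw : i ∉ q.support := fun hmem => (hq i hmem) hi
  have hr1 : rho i (i + 1) = 0 := rho_succ_self hn i
  have hr2 : rho i (i - 1) = n - 2 := rho_pred_self hn i
  have hk := walk_ivt hn q hiw (rho i s₀)
    (by rw [hr1, hr2]; omega)
    (by
      rw [hr1, hr2]
      have := rho_lt i s₀ hs₀i
      omega)
  obtain ⟨v, hv, hveq⟩ := hk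
  have hvs : v = s₀ := rho_inj hveq
  subst hvs
  exact (hq v hv) hs₀S

lemma phi_f0_ne [NeZero n] (hn : 3 ≤ n) {S : Set (Fin n)} (hind : ∀ i ∈ S, i + 1 ∉ S)
    (hS2 : ∀ i ∈ S, ∃ s₀ ∈ S, s₀ ≠ i) : phi S (f0 S) ≠ 0 := by
  classical
  rw [f0, map_mul, map_pow, map_prod]
  apply mul_ne_zero
  · apply pow_ne_zero
    rw [Pbig, map_prod]
    rw [Finset.prod_ne_zero_iff]
    intro w hw
    have hwc : w ∈ Sᶜ := (Finset.mem_filter.mp hw).2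
    exact phi_X_inl_ne S w hwc
  · rw [Finset.prod_ne_zero_iff]
    intro i hiF
    have hi : i ∈ S := (Finset.mem_filter.mp hiF).2
    have hpred : i - 1 ∈ Sᶜ := by
      intro hmem
      have := hind (i - 1) hmem
      rw [sub_add_cancel'] at this
      exact this hi
    have hsucc : i + 1 ∈ Sᶜ := fun hmem => (hind i hi) hmem
    exact phi_fij_ne S hpred hsucc
      (fun h => pred_succ_comps_ne hn hi (hS2 i hi) hpred hsucc h.symm)

end VN

namespace VN
open MvPolynomial SimpleGraph

variable {n : ℕ}

open scoped Classical in
noncomputable def psiMap [NeZero n] (Z Z' : Set (Fin n)) (r : CompT n Z' → CompT n Z) :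
    TR n Z' →ₐ[ℂ] TR n Z :=
  aeval (fun t => match t with
    | Sum.inl j => if j ∈ Z \ Z' then 0 else X (Sum.inl j)
    | Sum.inr (Sum.inl c) => X (Sum.inr (Sum.inl (r c)))
    | Sum.inr (Sum.inr c) => X (Sum.inr (Sum.inr (r c))))

open scoped Classical in
lemma psiMap_a [NeZero n] (Z Z' : Set (Fin n)) (r : CompT n Z' → CompT n Z) (j : Fin n) :
    psiMap Z Z' r (X (Sum.inl j)) = if j ∈ Z \ Z' then 0 else X (Sum.inl j) := by
  rw [psiMap, aeval_X]

open scoped Classical in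
lemma psiMap_u [NeZero n] (Z Z' : Set (Fin n)) (r : CompT n Z' → CompT n Z)
    (c : CompT n Z') :
    psiMap Z Z' r (X (Sum.inr (Sum.inl c))) = X (Sum.inr (Sum.inl (r c))) := by
  rw [psiMap, aeval_X]

open scoped Classical in
lemma psiMap_v [NeZero n] (Z Z' : Set (Fin n)) (r : CompT n Z' → CompT n Z)
    (c : CompT n Z') :
    psiMap Z Z' r (X (Sum.inr (Sum.inr c))) = X (Sum.inr (Sum.inr (r c))) := by
  rw [psiMap, aeval_X]

open scoped Classical in
noncomputable def killW [NeZero n] (w : Fin n) : PolyRing n →ₐ[ℂ] PolyRing n :=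
  aeval (fun v => if v = Sum.inl w ∨ v = Sum.inr w then 0 else X v)

open scoped Classical in
lemma killW_X [NeZero n] (w : Fin n) (v : Fin n ⊕ Fin n) :
    killW w (X v) = if v = Sum.inl w ∨ v = Sum.inr w then 0 else X v := by
  rw [killW, aeval_X]

lemma killW_eq_self [NeZero n] (w : Fin n) {g : PolyRing n}
    (hg : ∀ m ∈ g.support, m (Sum.inl w) = 0 ∧ m (Sum.inr w) = 0) :
    killW w g = g := by
  classical
  conv_lhs => rw [← support_sum_monomial_coeff g]
  rw [map_sum]
  conv_rhs => rw [← support_sum_monomial_coeff g]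
  apply Finset.sum_congr rfl
  intro m hm
  rw [killW, aeval_monomial]
  have halg : (algebraMap ℂ (PolyRing n)) (coeff m g) = C (coeff m g) := rfl
  rw [halg]
  have hprod : (m.prod fun v k =>
      (if v = Sum.inl w ∨ v = Sum.inr w then 0 else X v) ^ k : PolyRing n)
      = m.prod fun v k => (X v) ^ k := by
    apply Finsupp.prod_congr
    intro v hv
    have hvne : ¬ (v = Sum.inl w ∨ v = Sum.inr w) := by
      rintro (rfl | rfl)
      · exact (Finsupp.mem_support_iff.mp hv) (hg m hm).1
      · exact (Finsupp.mem_support_iff.mp hv) (hg m hm).2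
    rw [if_neg hvne]
  rw [hprod, ← monomial_eq]

/-- the transport lemma : a vanishing under `phi Z'` transports to `phi Z`
provided the polynomial does not involve the vertex `w`. -/
lemma transport [NeZero n] {Z Z' : Set (Fin n)} {w : Fin n}
    (F : TR n Z' →ₐ[ℂ] TR n Z)
    (hagree : ∀ v : Fin n ⊕ Fin n, v ≠ Sum.inl w → v ≠ Sum.inr w →
      F (phi Z' (X v)) = phi Z (X v))
    {g : PolyRing n} (hg : ∀ m ∈ g.support, m (Sum.inl w) = 0 ∧ m (Sum.inr w) = 0)
    (h0 : phi Z' g = 0) : phi Z g = 0 := by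
  classical
  have hcomp : ((F.comp (phi Z')).comp (killW w) : PolyRing n →ₐ[ℂ] TR n Z)
      = (phi Z).comp (killW w) := by
    apply MvPolynomial.algHom_ext
    intro v
    simp only [AlgHom.comp_apply]
    by_cases hv : v = Sum.inl w ∨ v = Sum.inr w
    · rw [killW_X, if_pos hv, map_zero, map_zero, map_zero]
    · push_neg at hv
      rw [killW_X, if_neg (by push_neg; exact hv)]
      exact hagree v hv.1 hv.2
  have h1 : phi Z g = ((phi Z).comp (killW w)) g := by
    rw [AlgHom.comp_apply, killW_eq_self w hg]
  rw [h1, ← hcomp]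
  simp only [AlgHom.comp_apply]
  rw [killW_eq_self w hg, h0, map_zero]

open scoped Classical in
noncomputable def rMap [NeZero n] (Z Z' : Set (Fin n)) (d : CompT n Z) :
    CompT n Z' → CompT n Z := fun K =>
  if h : ∃ u : ↥(Z'ᶜ), ((cycG n).induce Z'ᶜ).connectedComponentMk u = K ∧ (u : Fin n) ∈ Zᶜ
  then ((cycG n).induce Zᶜ).connectedComponentMk ⟨(h.choose : Fin n), h.choose_spec.2⟩
  else d

lemma rMap_spec [NeZero n] {Z Z' : Set (Fin n)} (d : CompT n Z)
    (hP : ∀ (u v : ↥(Z'ᶜ)), ((cycG n).induce Z'ᶜ).connectedComponentMk u =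
        ((cycG n).induce Z'ᶜ).connectedComponentMk v →
      ∀ (hu : (u : Fin n) ∈ Zᶜ) (hv : (v : Fin n) ∈ Zᶜ),
      ((cycG n).induce Zᶜ).connectedComponentMk ⟨u, hu⟩ =
        ((cycG n).induce Zᶜ).connectedComponentMk ⟨v, hv⟩)
    (u : ↥(Z'ᶜ)) (hu : (u : Fin n) ∈ Zᶜ) :
    rMap Z Z' d (((cycG n).induce Z'ᶜ).connectedComponentMk u)
      = ((cycG n).induce Zᶜ).connectedComponentMk ⟨(u : Fin n), hu⟩ := by
  classical
  have hex : ∃ u' : ↥(Z'ᶜ), ((cycG n).induce Z'ᶜ).connectedComponentMk u'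
      = ((cycG n).induce Z'ᶜ).connectedComponentMk u ∧ (u' : Fin n) ∈ Zᶜ := ⟨u, rfl, hu⟩
  rw [rMap, dif_pos hex]
  exact hP _ u hex.choose_spec.1 _ hu

/-- the master transport : if `Z' \ Z ⊆ {w}` and components of `Z'ᶜ`-live vertices
descend to `Zᶜ`-components, then vanishing transports. -/
lemma transport_master [NeZero n] {Z Z' : Set (Fin n)} {w : Fin n}
    (hdead : ∀ j, j ∈ Z' → j ∉ Z → j = w)
    (hP : ∀ (u v : ↥(Z'ᶜ)), ((cycG n).induce Z'ᶜ).connectedComponentMk u =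
        ((cycG n).induce Z'ᶜ).connectedComponentMk v →
      ∀ (hu : (u : Fin n) ∈ Zᶜ) (hv : (v : Fin n) ∈ Zᶜ),
      ((cycG n).induce Zᶜ).connectedComponentMk ⟨u, hu⟩ =
        ((cycG n).induce Zᶜ).connectedComponentMk ⟨v, hv⟩)
    (d : CompT n Z)
    {g : PolyRing n} (hg : ∀ m ∈ g.support, m (Sum.inl w) = 0 ∧ m (Sum.inr w) = 0)
    (h0 : phi Z' g = 0) : phi Z g = 0 := by
  classical
  apply transport (psiMap Z Z' (rMap Z Z' d)) ?_ hg h0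
  intro v hv1 hv2
  cases v with
  | inl j =>
    have hjw : j ≠ w := fun h => hv1 (by rw [h])
    by_cases hj' : j ∈ Z'
    · rw [phi_X_inl_dead Z' j hj', map_zero]
      have hjZ : j ∈ Z := by
        by_contra hjZ
        exact hjw (hdead j hj' hjZ)
      rw [phi_X_inl_dead Z j hjZ]
    · have hj'c : j ∈ Z'ᶜ := hj'
      rw [phi_X_inl Z' j hj'c, map_mul, psiMap_a, psiMap_u]
      by_cases hjZ : j ∈ Z
      · rw [if_pos ⟨hjZ, hj'⟩, zero_mul, phi_X_inl_dead Z j hjZ]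
      · have hjZc : j ∈ Zᶜ := hjZ
        rw [if_neg (fun hmem => hjZ hmem.1), phi_X_inl Z j hjZc,
          rMap_spec d hP ⟨j, hj'c⟩ hjZc]
  | inr j =>
    have hjw : j ≠ w := fun h => hv2 (by rw [h])
    by_cases hj' : j ∈ Z'
    · rw [phi_X_inr_dead Z' j hj', map_zero]
      have hjZ : j ∈ Z := by
        by_contra hjZ
        exact hjw (hdead j hj' hjZ)
      rw [phi_X_inr_dead Z j hjZ]
    · have hj'c : j ∈ Z'ᶜ := hj'
      rw [phi_X_inr Z' j hj'c, map_mul, psiMap_a, psiMap_v]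
      by_cases hjZ : j ∈ Z
      · rw [if_pos ⟨hjZ, hj'⟩, zero_mul, phi_X_inr_dead Z j hjZ]
      · have hjZc : j ∈ Zᶜ := hjZ
        rw [if_neg (fun hmem => hjZ hmem.1), phi_X_inr Z j hjZc,
          rMap_spec d hP ⟨j, hj'c⟩ hjZc]

end VN

namespace VN
open MvPolynomial SimpleGraph

variable {n : ℕ}

lemma succ_ne_self [NeZero n] (hn : 3 ≤ n) (w : Fin n) : w + 1 ≠ w := by
  intro h
  have h0 : (1 : Fin n) = 0 := by
    have h' : w + 1 = w + 0 := by rw [add_zero]; exact h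
    exact add_left_cancel h'
  have hv : ((1 : Fin n) : ℕ) = 1 := by
    rw [Fin.val_one']
    exact Nat.mod_eq_of_lt (by omega)
  rw [h0] at hv
  simp at hv

lemma pred_ne_self [NeZero n] (hn : 3 ≤ n) (w : Fin n) : w - 1 ≠ w := by
  intro h
  have := congrArg (· + 1) h
  simp only [sub_add_cancel'] at this
  exact succ_ne_self hn w this.symm

lemma pred_ne_succ [NeZero n] (hn : 3 ≤ n) (w : Fin n) : w - 1 ≠ w + 1 := by
  intro h
  have h1 := rho_pred_self hn w
  have h2 := rho_succ_self hn w
  rw [h] at h1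
  omega

/-- CASE A : `w` and both its neighbours are outside `S`. -/
lemma vertex_case_A [NeZero n] (hn : 3 ≤ n) {S : Set (Fin n)} (hSne : S.Nonempty)
    {w : Fin n} (hw : w ∉ S) (hw1 : w - 1 ∉ S) (hw2 : w + 1 ∉ S)
    {f : PolyRing n} (hfP : ∀ r ∈ primePS (cycG n) S, f * r ∈ beIdeal (cycG n))
    {μ : Fin n → ℕ} (hμ : μ w = 0) :
    phi S (Cmu vtx μ f) = 0 := by
  classical
  set Z' : Set (Fin n) := S ∪ {w} with hZ'
  have hwc : w ∈ Sᶜ := hw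
  have hw1c : w - 1 ∈ Sᶜ := hw1
  have hw2c : w + 1 ∈ Sᶜ := hw2
  have hw1Z : w - 1 ∈ Z'ᶜ := by
    intro hmem
    rcases hmem with h | h
    · exact hw1 h
    · exact pred_ne_self hn w h
  have hw2Z : w + 1 ∈ Z'ᶜ := by
    intro hmem
    rcases hmem with h | h
    · exact hw2 h
    · exact succ_ne_self hn w h
  -- fij (w-1) (w+1) ∈ P_S
  have hsc : SameComp (cycG n) Sᶜ (w - 1) (w + 1) := by
    refine ⟨hw1c, hw2c, ?_⟩
    have ha1 : ((cycG n).induce Sᶜ).Adj ⟨w - 1, hw1c⟩ ⟨w, hwc⟩ := adj_pred hn w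
    have ha2 : ((cycG n).induce Sᶜ).Adj ⟨w, hwc⟩ ⟨w + 1, hw2c⟩ := adj_succ hn w
    exact ha1.reachable.trans ha2.reachable
  have hPS : fij (w - 1) (w + 1) ∈ primePS (cycG n) S :=
    fij_mem_PS (pred_ne_succ hn w) hsc
  -- comps of w-1 and w+1 in Z'ᶜ differ
  have hcne : ((cycG n).induce Z'ᶜ).connectedComponentMk ⟨w - 1, hw1Z⟩ ≠
      ((cycG n).induce Z'ᶜ).connectedComponentMk ⟨w + 1, hw2Z⟩ := by
    intro h
    obtain ⟨W⟩ := SimpleGraph.ConnectedComponent.exact h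
    obtain ⟨q, hq⟩ := induced_walk_to_cyc W
    obtain ⟨s₀, hs₀⟩ := hSne
    have hs₀w : s₀ ≠ w := fun h' => hw (h' ▸ hs₀)
    have hwq : w ∉ q.support := by
      intro hmem
      exact (hq w hmem) (Or.inr rfl)
    have hr1 : rho w (w - 1) = n - 2 := rho_pred_self hn w
    have hr2 : rho w (w + 1) = 0 := rho_succ_self hn w
    have hk := walk_ivt hn q hwq (rho w s₀)
      (by rw [hr1, hr2]; omega)
      (by
        rw [hr1, hr2]
        have := rho_lt w s₀ hs₀w
        omega)
    obtain ⟨v, hv, hveq⟩ := hk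
    have : v = s₀ := rho_inj hveq
    subst this
    exact (hq v hv) (Or.inl hs₀)
  -- φ_{Z'} f = 0
  have hker : phi Z' (f * fij (w - 1) (w + 1)) = 0 := phi_J_zero Z' (hfP _ hPS)
  rw [map_mul] at hker
  have hfij_ne : phi Z' (fij (w - 1) (w + 1)) ≠ 0 := phi_fij_ne Z' hw1Z hw2Z hcne
  have hf0 : phi Z' f = 0 := by
    rcases mul_eq_zero.mp hker with h | h
    · exact h
    · exact absurd h hfij_ne
  -- φ_{Z'} of the component vanishes
  have hg0 : phi Z' (Cmu vtx μ f) = 0 := by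
    rw [Cmu_phi, hf0, Cmu_zero]
  -- transport
  refine transport_master (w := w) ?_ ?_
    (((cycG n).induce Sᶜ).connectedComponentMk ⟨w, hwc⟩)
    (vh_no_w (Cmu_vh vtx μ f) hμ) hg0
  · intro j hj hjS
    rcases hj with h | h
    · exact absurd h hjS
    · exact h
  · intro u v hK hu hv
    have hsub : Z'ᶜ ⊆ Sᶜ := Set.compl_subset_compl.mpr Set.subset_union_left
    have hreach := SimpleGraph.ConnectedComponent.exact hK
    have := reachable_mono hsub hreach
    exact SimpleGraph.ConnectedComponent.sound this

/-- CASE B/C common : `w ∉ S`, `i ∈ S` adjacent-ish; kill `w`, revive `i`. -/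
lemma vertex_case_BC [NeZero n] {S : Set (Fin n)}
    {w i : Fin n} (hi : i ∈ S) (hw : w ∉ S) (hiw : i ≠ w)
    (hx : i ∈ ((S \ {i}) ∪ {w} : Set (Fin n))ᶜ)
    (huniq : ∀ u v : ↥(((S \ {i}) ∪ {w} : Set (Fin n))ᶜ),
      ((cycG n).induce ((S \ {i}) ∪ {w} : Set (Fin n))ᶜ).Adj ⟨i, hx⟩ u →
      ((cycG n).induce ((S \ {i}) ∪ {w} : Set (Fin n))ᶜ).Adj ⟨i, hx⟩ v → u = v)
    {f : PolyRing n} (hfP : ∀ r ∈ primePS (cycG n) S, f * r ∈ beIdeal (cycG n))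
    {μ : Fin n → ℕ} (hμ : μ w = 0) :
    phi S (Cmu vtx μ f) = 0 := by
  classical
  set Z' : Set (Fin n) := (S \ {i}) ∪ {w} with hZ'
  have hwc : w ∈ Sᶜ := hw
  -- φ_{Z'} f = 0 via the generator X_i
  have hker : phi Z' (f * X (Sum.inl i)) = 0 := phi_J_zero Z' (hfP _ (X_inl_mem_PS hi))
  rw [map_mul] at hker
  have hf0 : phi Z' f = 0 := by
    rcases mul_eq_zero.mp hker with h | h
    · exact h
    · exact absurd h (phi_X_inl_ne Z' i hx)
  have hg0 : phi Z' (Cmu vtx μ f) = 0 := by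
    rw [Cmu_phi, hf0, Cmu_zero]
  refine transport_master (w := w) ?_ ?_
    (((cycG n).induce Sᶜ).connectedComponentMk ⟨w, hwc⟩)
    (vh_no_w (Cmu_vh vtx μ f) hμ) hg0
  · intro j hj hjS
    rcases hj with h | h
    · exact absurd h.1 hjS
    · exact h
  · intro u v hK hu hv
    obtain ⟨W⟩ := SimpleGraph.ConnectedComponent.exact hK
    have hune : u ≠ (⟨i, hx⟩ : ↥(Z'ᶜ)) := by
      intro h
      have : (u : Fin n) = i := congrArg Subtype.val h
      exact hu (this ▸ hi)
    have hvne : v ≠ (⟨i, hx⟩ : ↥(Z'ᶜ)) := by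
      intro h
      have : (v : Fin n) = i := congrArg Subtype.val h
      exact hv (this ▸ hi)
    obtain ⟨q, hq⟩ := excise (huniq) W hune hvne
    have hall : ∀ v' ∈ q.support, (v' : Fin n) ∈ Sᶜ := by
      intro v' hv'
      intro hv'S
      have h1 : (v' : Fin n) ∉ Z' := v'.2
      have h2 : (v' : Fin n) ∉ S \ {i} := fun hh => h1 (Or.inl hh)
      have h3 : (v' : Fin n) = i := by
        by_contra hne
        exact h2 ⟨hv'S, hne⟩
      apply hq
      have : v' = (⟨i, hx⟩ : ↥(Z'ᶜ)) := Subtype.ext h3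
      rwa [this] at hv'
    have := walk_transfer q hall hu hv
    exact SimpleGraph.ConnectedComponent.sound this

end VN

namespace VN
open MvPolynomial SimpleGraph

variable {n : ℕ}

lemma Cmu_isHomog {σ : Type*} {π : σ → Option (Fin n)} {μ : Fin n → ℕ}
    {f : MvPolynomial σ ℂ} {d : ℕ} (hf : f.IsHomogeneous d) :
    (Cmu π μ f).IsHomogeneous d := by
  intro d' hd'
  rw [coeff_Cmu] at hd'
  split_ifs at hd' with h
  · exact hf hd'
  · exact absurd rfl hd'

open scoped Classical in
lemma f0_homog [NeZero n] (S : Set (Fin n)) :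
    (f0 S).IsHomogeneous
      (n * (Finset.univ.filter (fun w : Fin n => w ∈ Sᶜ)).card
        + ∑ _i ∈ Finset.univ.filter (fun i : Fin n => i ∈ S), 2) := by
  apply MvPolynomial.IsHomogeneous.mul
  · have hP : (Pbig S : PolyRing n).IsHomogeneous
        ((Finset.univ.filter (fun w : Fin n => w ∈ Sᶜ)).card) := by
      have := MvPolynomial.IsHomogeneous.prod
        (Finset.univ.filter (fun w : Fin n => w ∈ Sᶜ))
        (fun w => (X (Sum.inl w) : PolyRing n)) (fun _ => 1)
        (fun i _ => isHomogeneous_X _ _)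
      simpa [Pbig] using this
    have := hP.pow n
    rwa [mul_comm] at this
  · apply MvPolynomial.IsHomogeneous.prod
    intro i _
    apply MvPolynomial.IsHomogeneous.sub
    · have h1 := isHomogeneous_X ℂ (Sum.inl (i - 1) : Fin n ⊕ Fin n)
      have h2 := isHomogeneous_X ℂ (Sum.inr (i + 1) : Fin n ⊕ Fin n)
      simpa using h1.mul h2
    · have h1 := isHomogeneous_X ℂ (Sum.inl (i + 1) : Fin n ⊕ Fin n)
      have h2 := isHomogeneous_X ℂ (Sum.inr (i - 1) : Fin n ⊕ Fin n)
      simpa using h1.mul h2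

/-- the colon ideal of `f0` is exactly `P_S` -/
lemma colon_f0 [NeZero n] (hn : 3 ≤ n) {S : Set (Fin n)} (hind : ∀ i ∈ S, i + 1 ∉ S)
    (hS2 : ∀ i ∈ S, ∃ s₀ ∈ S, s₀ ≠ i) :
    Submodule.colon (beIdeal (cycG n)) (Ideal.span {f0 S}) = primePS (cycG n) S := by
  apply le_antisymm
  · intro r hr
    have hmem := Submodule.mem_colon.mp hr (f0 S) (Ideal.subset_span rfl)
    rw [smul_eq_mul] at hmem
    have h0 : phi S (r * f0 S) = 0 := phi_J_zero S hmem
    rw [map_mul] at h0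
    rcases mul_eq_zero.mp h0 with h | h
    · exact ker_phi_sub_PS S h
    · exact absurd h (phi_f0_ne hn hind hS2)
  · intro r hr
    rw [Submodule.mem_colon]
    intro p hp
    obtain ⟨c, rfl⟩ := Ideal.mem_span_singleton'.mp hp
    rw [smul_eq_mul]
    have : r * (c * f0 S) = c * (f0 S * r) := by ring
    rw [this]
    exact Ideal.mul_mem_left _ _ (f0_mul_PS_mem hn r hr)

end VN

/-- lower bound `v_{P_S}(J_{C_n}) ≥ n − |S|` for `|S| ≥ 3`. -/
theorem stmt15 {n : ℕ} [NeZero n] (hn : 3 ≤ n) (S : Set (Fin n))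
    (hS : S ∈ minSet (cycG n)) (hcard : 3 ≤ S.ncard) :
    n - S.ncard ≤ vAt (beIdeal (cycG n)) (primePS (cycG n) S) := by
  classical
  open VN SimpleGraph MvPolynomial in
  have hSne : S.Nonempty := by
    apply Set.nonempty_of_ncard_ne_zero
    omega
  have hind : ∀ i ∈ S, i + 1 ∉ S := VN.indep_of_minSet hn hS hSne
  have hS2 : ∀ i ∈ S, ∃ s₀ ∈ S, s₀ ≠ i := by
    intro i _
    exact Set.exists_ne_of_one_lt_ncard (by omega) i
  rw [vAt]
  apply le_csInf
  · -- nonemptiness via f0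
    exact ⟨_, VN.f0 S, VN.f0_homog S, VN.colon_f0 hn hind hS2⟩
  · -- lower bound
    rintro d ⟨f, hfhom, hcolon⟩
    -- (a) f multiplies P_S into J
    have hfP : ∀ r ∈ primePS (cycG n) S, f * r ∈ beIdeal (cycG n) := by
      intro r hr
      rw [← hcolon] at hr
      have := Submodule.mem_colon.mp hr f (Ideal.subset_span rfl)
      rw [smul_eq_mul, mul_comm] at this
      exact this
    -- (b) f is not in ker φ_S
    have hfker : VN.phi S f ≠ 0 := by
      intro h0
      have hfPS : f ∈ primePS (cycG n) S := VN.ker_phi_sub_PS S h0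
      have hf0f : VN.f0 S * f ∈ beIdeal (cycG n) := VN.f0_mul_PS_mem hn f hfPS
      have hf0colon : VN.f0 S ∈ Submodule.colon (beIdeal (cycG n)) (Ideal.span {f}) := by
        rw [Submodule.mem_colon]
        intro p hp
        obtain ⟨c, rfl⟩ := Ideal.mem_span_singleton'.mp hp
        rw [smul_eq_mul]
        have : VN.f0 S * (c * f) = c * (VN.f0 S * f) := by ring
        rw [this]
        exact Ideal.mul_mem_left _ _ hf0f
      rw [hcolon] at hf0colon
      exact (VN.phi_f0_ne hn hind hS2) (VN.phi_PS_zero S hf0colon)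
    -- (c) find a multidegree component surviving φ_S
    have hex : ∃ μ ∈ f.support.image (VN.wdeg VN.vtx), VN.phi S (VN.Cmu VN.vtx μ f) ≠ 0 := by
      by_contra hc
      push_neg at hc
      apply hfker
      conv_lhs => rw [← VN.sum_Cmu VN.vtx f]
      rw [map_sum]
      apply Finset.sum_eq_zero
      intro μ hμ
      exact hc μ hμ
    obtain ⟨μ, _, hgne⟩ := hex
    -- (d) every vertex outside S has positive multidegree
    have hpos : ∀ w, w ∉ S → 1 ≤ μ w := by
      intro w hw
      by_contra hc
      have hμw : μ w = 0 := by omega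
      by_cases hB : w - 1 ∈ S
      · -- case B
        have hiw : w - 1 ≠ w := VN.pred_ne_self hn w
        have hx : w - 1 ∈ ((S \ {w - 1}) ∪ {w} : Set (Fin n))ᶜ := by
          intro hmem
          rcases hmem with h | h
          · exact h.2 rfl
          · exact hiw h
        apply hgne
        refine VN.vertex_case_BC hB hw hiw hx ?_ hfP hμw
        intro u v hu hv
        have key : ∀ z : ↥(((S \ {w - 1}) ∪ {w} : Set (Fin n))ᶜ),
            ((cycG n).induce ((S \ {w - 1}) ∪ {w} : Set (Fin n))ᶜ).Adj ⟨w - 1, hx⟩ z →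
            (z : Fin n) = w - 1 - 1 := by
          intro z hz
          have hadj : (cycG n).Adj (w - 1) (z : Fin n) := hz
          rcases VN.cyc_adj.mp hadj with ⟨hne, h | h⟩
          · exfalso
            rw [VN.sub_add_cancel'] at h
            exact (z.2 : (z : Fin n) ∉ (S \ {w - 1}) ∪ {w}) (Or.inr h)
          · exact eq_sub_of_add_eq h.symm
        exact Subtype.ext ((key u hu).trans (key v hv).symm)
      · by_cases hC : w + 1 ∈ S
        · -- case C
          have hiw : w + 1 ≠ w := VN.succ_ne_self hn w
          have hx : w + 1 ∈ ((S \ {w + 1}) ∪ {w} : Set (Fin n))ᶜ := by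
            intro hmem
            rcases hmem with h | h
            · exact h.2 rfl
            · exact hiw h
          apply hgne
          refine VN.vertex_case_BC hC hw hiw hx ?_ hfP hμw
          intro u v hu hv
          have key : ∀ z : ↥(((S \ {w + 1}) ∪ {w} : Set (Fin n))ᶜ),
              ((cycG n).induce ((S \ {w + 1}) ∪ {w} : Set (Fin n))ᶜ).Adj ⟨w + 1, hx⟩ z →
              (z : Fin n) = w + 1 + 1 := by
            intro z hz
            have hadj : (cycG n).Adj (w + 1) (z : Fin n) := hz
            rcases VN.cyc_adj.mp hadj with ⟨hne, h | h⟩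
            · exact h
            · exfalso
              have hzw : (z : Fin n) = w := add_right_cancel h.symm
              exact (z.2 : (z : Fin n) ∉ (S \ {w + 1}) ∪ {w}) (Or.inr hzw)
          exact Subtype.ext ((key u hu).trans (key v hv).symm)
        · -- case A
          apply hgne
          exact VN.vertex_case_A hn hSne hw hB hC hfP hμw
    -- (e) degree count
    have hgne0 : VN.Cmu VN.vtx μ f ≠ 0 := by
      intro h
      rw [h, map_zero] at hgne
      exact hgne rfl
    have hsum : ∑ v : Fin n, μ v = d :=
      VN.vh_degree (VN.Cmu_vh VN.vtx μ f) (VN.Cmu_isHomog hfhom) hgne0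
    have hcount : n - S.ncard ≤ ∑ v : Fin n, μ v := by
      have h1 : ∑ v ∈ Finset.univ.filter (fun v : Fin n => v ∉ S), μ v ≤ ∑ v : Fin n, μ v :=
        Finset.sum_le_sum_of_subset (Finset.filter_subset _ _)
      have h2 : (Finset.univ.filter (fun v : Fin n => v ∉ S)).card
          ≤ ∑ v ∈ Finset.univ.filter (fun v : Fin n => v ∉ S), μ v := by
        have := Finset.card_nsmul_le_sum (Finset.univ.filter (fun v : Fin n => v ∉ S)) μ 1
          (fun v hv => hpos v (Finset.mem_filter.mp hv).2)
        rwa [smul_eq_mul, mul_one] at this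
      have h3 : (Finset.univ.filter (fun v : Fin n => v ∉ S)).card = n - S.ncard := by
        have hcompl := Finset.card_filter_add_card_filter_not
          (s := (Finset.univ : Finset (Fin n))) (p := fun v : Fin n => v ∈ S)
        have hncard : S.ncard = (Finset.univ.filter (fun v : Fin n => v ∈ S)).card := by
          rw [Set.ncard_eq_toFinset_card']
          congr 1
          ext v
          simp [Set.mem_toFinset]
        rw [Finset.card_univ, Fintype.card_fin] at hcompl
        omega
      omega
    omega
end
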